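/- arXiv:2602.21115 — 4 statements merged into one kernel-verified Lean document; each statement's English description precedes it below -/
import Mathlib

section
/- Let n ≥ 2 and let u : (0,1] → ℝ be a C² radial solution of -u''(r) - (n-1)/r · u'(r) = f(u(r)) on (0,1) with u(1) = 0, 0 ≤ u ≤ 1, where f : [0,1) → [0,∞) is C¹ and nondecreasing. Then |u'(t)| ≥ t |u'(1)| for all t ∈ (0,1]. -/
open Set
open Filter Topology

/-- For a C² radial solution `u` of `-u'' - (n-1)/r u' = f(u)` on
`(0,1)` with `u(1)=0`, `0 ≤ u ≤ 1` and `f ≥ 0` C¹ nondecreasing, one has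
`|u'(t)| ≥ t|u'(1)|` for all `t ∈ (0,1]`. -/
theorem stmt_10 (n : ℕ) (hn : 2 ≤ n) (u f : ℝ → ℝ)
    (hu : ContDiffOn ℝ 2 u (Set.Ioc 0 1)) (hu1 : u 1 = 0)
    (hub : ∀ r ∈ Set.Ioc (0:ℝ) 1, 0 ≤ u r ∧ u r ≤ 1)
    (hf : ContDiffOn ℝ 1 f (Set.Ico 0 1))
    (hfpos : ∀ t ∈ Set.Ico (0:ℝ) 1, 0 ≤ f t)
    (hfmono : MonotoneOn f (Set.Ico 0 1))
    (heq : ∀ r ∈ Set.Ioo (0:ℝ) 1,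
      -(deriv (deriv u) r) - ((n:ℝ) - 1) / r * deriv u r = f (u r)) :
    ∀ t ∈ Set.Ioc (0:ℝ) 1, t * |deriv u 1| ≤ |deriv u t| := by
  -- basic regularity plumbing
  have huo : ContDiffOn ℝ 2 u (Ioo 0 1) := hu.mono Ioo_subset_Ioc_self
  have hcd1 : ContDiffOn ℝ 1 (deriv u) (Ioo 0 1) := by
    have := huo.deriv_of_isOpen isOpen_Ioo (m := 1) (by norm_num)
    exact this
  have hdiffu : ∀ r ∈ Ioo (0:ℝ) 1, DifferentiableAt ℝ u r := fun r hr =>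
    ((huo.differentiableOn (by norm_num)) r hr).differentiableAt (isOpen_Ioo.mem_nhds hr)
  have hd2 : ∀ r ∈ Ioo (0:ℝ) 1, HasDerivAt (deriv u) (deriv (deriv u) r) r := fun r hr =>
    (((hcd1.differentiableOn (by norm_num)) r hr).differentiableAt (isOpen_Ioo.mem_nhds hr)).hasDerivAt
  have hcontu' : ContinuousOn (deriv u) (Ioo 0 1) := hcd1.continuousOn
  have hcontu'' : ContinuousOn (deriv (deriv u)) (Ioo 0 1) := by
    have := hcd1.deriv_of_isOpen isOpen_Ioo (m := 0) (by norm_num)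
    exact this.continuousOn
  have hcontu : ContinuousOn u (Ioc 0 1) := hu.continuousOn
  -- the function G r = -(r^(n-1) * u'(r))
  set G : ℝ → ℝ := fun r => -(r ^ (n-1) * deriv u r) with hGdef
  have hGd : ∀ r ∈ Ioo (0:ℝ) 1, HasDerivAt G (r ^ (n-1) * f (u r)) r := by
    intro r hr
    have h1 : HasDerivAt (fun x : ℝ => x ^ (n-1) * deriv u x)
        ((↑(n-1) * r ^ (n-1-1)) * deriv u r + r ^ (n-1) * deriv (deriv u) r) r :=
      (hasDerivAt_pow (n-1) r).mul (hd2 r hr)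
    have h2 : HasDerivAt G (-((↑(n-1) * r ^ (n-1-1)) * deriv u r + r ^ (n-1) * deriv (deriv u) r)) r := h1.neg
    convert h2 using 1
    rw [← heq r hr]
    have hr0 : r ≠ 0 := ne_of_gt hr.1
    have hcast : ((n-1 : ℕ) : ℝ) = (n:ℝ) - 1 := by
      have : (1:ℕ) ≤ n := by omega
      push_cast [this]; ring
    have hpow : r ^ (n-1) = r ^ (n-2) * r := by
      rw [← pow_succ]; congr 1; omega
    have hpow2 : n - 1 - 1 = n - 2 := by omega
    rw [hcast, hpow2, hpow]
    field_simp
    ring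
  -- f(u r) >= 0 on (0,1)
  have hstar : ∀ r ∈ Ioo (0:ℝ) 1, 0 ≤ f (u r) := by
    intro r hr
    have hur := hub r (Ioo_subset_Ioc_self hr)
    rcases lt_or_eq_of_le hur.2 with h1 | h1
    · exact hfpos _ ⟨hur.1, h1⟩
    -- u r = 1 : r is an interior maximum
    by_contra hneg
    push_neg at hneg
    have hmax : IsLocalMax u r := by
      filter_upwards [isOpen_Ioo.mem_nhds hr] with y hy
      rw [h1]; exact (hub y (Ioo_subset_Ioc_self hy)).2
    have hu'r : deriv u r = 0 := hmax.deriv_eq_zero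
    have hu''r : 0 < deriv (deriv u) r := by
      have h5 := heq r hr
      rw [h1, hu'r, mul_zero, sub_zero] at h5
      rw [h1] at hneg
      linarith
    -- deriv u is positive just to the right of r
    have hslope : Tendsto (slope (deriv u) r) (𝓝[>] r) (𝓝 (deriv (deriv u) r)) :=
      ((hasDerivAt_iff_tendsto_slope.1 (hd2 r hr)).mono_left
        (nhdsWithin_mono _ fun y hy => ne_of_gt hy))
    have hev : ∀ᶠ y in 𝓝[>] r, 0 < deriv u y ∧ y ∈ Ioo r 1 := by
      have h2 : ∀ᶠ y in 𝓝[>] r, 0 < slope (deriv u) r y :=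
        hslope.eventually (eventually_gt_nhds hu''r)
      have h3 : Ioo r 1 ∈ 𝓝[>] r := Ioo_mem_nhdsGT_of_mem ⟨le_rfl, hr.2⟩
      filter_upwards [h2, h3] with y hy hy'
      refine ⟨?_, hy'⟩
      have hyr : (0:ℝ) < y - r := sub_pos.2 hy'.1
      have hs : slope (deriv u) r y = deriv u y / (y - r) := by
        rw [slope_def_field, hu'r]; ring
      rw [hs] at hy
      have h4 := mul_pos hy hyr
      rwa [div_mul_cancel₀ _ hyr.ne'] at h4
    obtain ⟨s, hs1, hs2⟩ := hev.exists_mem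
    obtain ⟨b, hb, hIoo⟩ := mem_nhdsGT_iff_exists_Ioo_subset.1 hs1
    have hb' : r < b := hb
    set c : ℝ := (r + b) / 2 with hc
    have hrc : r < c := by simp only [hc]; linarith
    have hcb : c < b := by simp only [hc]; linarith
    have hprops := hs2 _ (hIoo ⟨hrc, hcb⟩)
    have hsub : Icc r c ⊆ Ioo (0:ℝ) 1 := fun x hx =>
      ⟨lt_of_lt_of_le hr.1 hx.1, lt_of_le_of_lt hx.2 hprops.2.2⟩
    have hmono : StrictMonoOn u (Icc r c) := by
      apply strictMonoOn_of_deriv_pos (convex_Icc r c)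
      · exact ContinuousOn.mono (hcontu.mono Ioo_subset_Ioc_self) hsub
      · intro x hx
        rw [interior_Icc] at hx
        exact (hs2 _ (hIoo ⟨hx.1, lt_trans hx.2 hcb⟩)).1
    have : u r < u c := hmono (left_mem_Icc.2 hrc.le) (right_mem_Icc.2 hrc.le) hrc
    rw [h1] at this
    exact absurd (hub c (Ioo_subset_Ioc_self (hsub (right_mem_Icc.2 hrc.le)))).2 (not_le.2 this)
  -- G is monotone on (0,1)
  have hGcont : ContinuousOn G (Ioo 0 1) := ((continuousOn_pow (n-1)).mul hcontu').neg
  have hGmono : MonotoneOn G (Ioo 0 1) := by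
    apply monotoneOn_of_deriv_nonneg (convex_Ioo 0 1) hGcont
    · rw [isOpen_Ioo.interior_eq]
      exact fun r hr => (hGd r hr).differentiableAt.differentiableWithinAt
    · rw [isOpen_Ioo.interior_eq]
      intro r hr
      rw [(hGd r hr).deriv]
      exact mul_nonneg (pow_nonneg hr.1.le _) (hstar r hr)
  -- u' is nonpositive on (0,1)
  have hu'nonpos : ∀ r ∈ Ioo (0:ℝ) 1, deriv u r ≤ 0 := by
    intro s₀ hs₀
    by_contra hpos
    push_neg at hpos
    set c : ℝ := s₀ ^ (n-1) * deriv u s₀ with hcdef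
    have hc : 0 < c := mul_pos (pow_pos hs₀.1 _) hpos
    -- below s₀, u' s ≥ c / s
    have hlow : ∀ s ∈ Ioo (0:ℝ) 1, s ≤ s₀ → c / s ≤ deriv u s := by
      intro s hs hss
      have hGle : G s ≤ G s₀ := hGmono hs hs₀ hss
      have h1 : c ≤ s ^ (n-1) * deriv u s := by
        simp only [hGdef] at hGle
        simpa [hcdef] using neg_le_neg_iff.1 hGle
      have hsp : (0:ℝ) < s ^ (n-1) := pow_pos hs.1 _
      have h2 : c / s ^ (n-1) ≤ deriv u s := (div_le_iff₀ hsp).2 (by linarith [h1])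
      refine le_trans ?_ h2
      apply div_le_div_of_nonneg_left hc.le hsp
      calc s ^ (n-1) ≤ s ^ 1 := pow_le_pow_of_le_one hs.1.le hs.2.le (by omega)
        _ = s := pow_one s
    set ε : ℝ := s₀ * Real.exp (-2 / c) with hεdef
    have hε0 : 0 < ε := mul_pos hs₀.1 (Real.exp_pos _)
    have hεlt : ε < s₀ := by
      have h6 : Real.exp (-2 / c) < 1 :=
        Real.exp_lt_one_iff.2 (div_neg_of_neg_of_pos (by norm_num) hc)
      exact mul_lt_of_lt_one_right hs₀.1 h6
    -- v = u - c * log is monotone on [ε, s₀]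
    have hvmono : MonotoneOn (fun s => u s - c * Real.log s) (Icc ε s₀) := by
      apply monotoneOn_of_deriv_nonneg (convex_Icc ε s₀)
      · apply ContinuousOn.sub
        · exact (hcontu.mono Ioo_subset_Ioc_self).mono
            (fun x hx => ⟨lt_of_lt_of_le hε0 hx.1, lt_of_le_of_lt hx.2 hs₀.2⟩)
        · exact (continuousOn_const.mul (Real.continuousOn_log.mono
            (fun x hx => ne_of_gt (lt_of_lt_of_le hε0 hx.1))))
      · rw [interior_Icc]
        intro x hx
        have hx' : x ∈ Ioo (0:ℝ) 1 := ⟨lt_trans hε0 hx.1, lt_trans hx.2 hs₀.2⟩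
        exact ((hdiffu x hx').sub ((Real.hasDerivAt_log (ne_of_gt hx'.1)).const_mul c).differentiableAt).differentiableWithinAt
      · rw [interior_Icc]
        intro x hx
        have hx' : x ∈ Ioo (0:ℝ) 1 := ⟨lt_trans hε0 hx.1, lt_trans hx.2 hs₀.2⟩
        have hdv : HasDerivAt (fun s => u s - c * Real.log s) (deriv u x - c * x⁻¹) x :=
          ((hdiffu x hx').hasDerivAt).sub ((Real.hasDerivAt_log (ne_of_gt hx'.1)).const_mul c)
        rw [hdv.deriv]
        have := hlow x hx' hx.2.le
        rw [div_eq_mul_inv] at this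
        linarith
    have hvle := hvmono (left_mem_Icc.2 hεlt.le) (right_mem_Icc.2 hεlt.le) hεlt.le
    have hlog : Real.log ε = Real.log s₀ + (-2 / c) := by
      rw [hεdef, Real.log_mul (ne_of_gt hs₀.1) (Real.exp_ne_zero _), Real.log_exp]
    simp only [] at hvle
    rw [hlog] at hvle
    have hcc : c * (Real.log s₀ + (-2 / c)) = c * Real.log s₀ - 2 := by
      rw [mul_add]
      have : c * (-2 / c) = -2 := by field_simp
      rw [this]; ring
    have hu0 : 0 ≤ u ε := (hub ε ⟨hε0, le_of_lt (lt_trans hεlt hs₀.2)⟩).1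
    have hu1' : u s₀ ≤ 1 := (hub s₀ (Ioo_subset_Ioc_self hs₀)).2
    linarith [hvle, hcc]
  -- u is antitone on (0,1)
  have hUanti : AntitoneOn u (Ioo 0 1) := by
    apply antitoneOn_of_deriv_nonpos (convex_Ioo 0 1) (hcontu.mono Ioo_subset_Ioc_self)
    · rw [isOpen_Ioo.interior_eq]
      exact fun r hr => (hdiffu r hr).differentiableWithinAt
    · rw [isOpen_Ioo.interior_eq]; exact hu'nonpos
  have hG0 : ∀ r ∈ Ioo (0:ℝ) 1, 0 ≤ G r := by
    intro r hr
    simp only [hGdef]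
    have := hu'nonpos r hr
    have : r ^ (n-1) * deriv u r ≤ 0 := mul_nonpos_of_nonneg_of_nonpos (pow_nonneg hr.1.le _) this
    linarith
  -- u < 1 on (0,1)
  have hlt1 : ∀ r ∈ Ioo (0:ℝ) 1, u r < 1 := by
    by_contra hcon
    push_neg at hcon
    obtain ⟨r₁, hr₁, hr₁1⟩ := hcon
    have hur₁ : u r₁ = 1 := le_antisymm (hub r₁ (Ioo_subset_Ioc_self hr₁)).2 hr₁1
    set S : Set ℝ := {r : ℝ | r ∈ Ioo (0:ℝ) 1 ∧ u r = 1} with hSdef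
    have hSne : S.Nonempty := ⟨r₁, hr₁, hur₁⟩
    have hSbdd : BddAbove S := ⟨1, fun s hs => hs.1.2.le⟩
    set a : ℝ := sSup S with hadef
    have ha_le1 : a ≤ 1 := csSup_le hSne (fun s hs => hs.1.2.le)
    have ha0 : 0 < a := lt_of_lt_of_le hr₁.1 (le_csSup hSbdd ⟨hr₁, hur₁⟩)
    -- every point of (0,1) below a has u = 1
    have hSet : ∀ r ∈ Ioo (0:ℝ) 1, r < a → u r = 1 := by
      intro r hr hra
      obtain ⟨s, hsS, hrs⟩ := exists_lt_of_lt_csSup hSne hra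
      have h1 : u s ≤ u r := hUanti hr hsS.1 hrs.le
      rw [hsS.2] at h1
      exact le_antisymm (hub r (Ioo_subset_Ioc_self hr)).2 h1
    -- a < 1
    have ha_lt1 : a < 1 := by
      rcases lt_or_eq_of_le ha_le1 with h | h
      · exact h
      exfalso
      have hall : ∀ r ∈ Ioo (0:ℝ) 1, u r = 1 := fun r hr => hSet r hr (h ▸ hr.2)
      have hne : (𝓝[Ioo (1/2:ℝ) 1] (1:ℝ)).NeBot := by
        rw [← mem_closure_iff_nhdsWithin_neBot, closure_Ioo (by norm_num : (1/2:ℝ) ≠ 1)]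
        exact ⟨by norm_num, le_rfl⟩
      have ht1 : Tendsto u (𝓝[Ioo (1/2:ℝ) 1] 1) (𝓝 (u 1)) :=
        (hcontu 1 (right_mem_Ioc.2 one_pos)).mono_left
          (nhdsWithin_mono _ (fun x hx => ⟨by linarith [hx.1], hx.2.le⟩))
      have ht2 : Tendsto u (𝓝[Ioo (1/2:ℝ) 1] 1) (𝓝 1) := by
        apply Tendsto.congr' _ tendsto_const_nhds
        filter_upwards [self_mem_nhdsWithin] with x hx
        exact (hall x ⟨by linarith [hx.1], hx.2⟩).symm
      rw [hu1] at ht1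
      exact zero_ne_one (tendsto_nhds_unique ht1 ht2)
    have haI : a ∈ Ioo (0:ℝ) 1 := ⟨ha0, ha_lt1⟩
    -- u a = 1
    have hua : u a = 1 := by
      have h1 : Tendsto u (𝓝[<] a) (𝓝 (u a)) :=
        ((hdiffu a haI).continuousAt.tendsto).mono_left nhdsWithin_le_nhds
      have h2 : Tendsto u (𝓝[<] a) (𝓝 1) := by
        apply Tendsto.congr' _ tendsto_const_nhds
        filter_upwards [Ioo_mem_nhdsLT_of_mem (⟨ha0, le_rfl⟩ : a ∈ Ioc 0 a)] with x hx
        exact (hSet x ⟨hx.1, lt_trans hx.2 ha_lt1⟩ hx.2).symm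
      exact tendsto_nhds_unique h1 h2
    -- u' and u'' vanish below a and at a
    have hu'0 : ∀ r ∈ Ioo (0:ℝ) a, deriv u r = 0 := by
      intro r hr
      have hev : u =ᶠ[𝓝 r] (fun _ => 1) := by
        filter_upwards [isOpen_Ioo.mem_nhds hr] with x hx
        exact hSet x ⟨hx.1, lt_trans hx.2 ha_lt1⟩ hx.2
      rw [hev.deriv_eq, deriv_const]
    have hu'a : deriv u a = 0 := by
      have h1 : Tendsto (deriv u) (𝓝[<] a) (𝓝 (deriv u a)) :=
        ((hcontu'.continuousAt (isOpen_Ioo.mem_nhds haI)).tendsto).mono_left nhdsWithin_le_nhds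
      have h2 : Tendsto (deriv u) (𝓝[<] a) (𝓝 0) := by
        apply Tendsto.congr' _ tendsto_const_nhds
        filter_upwards [Ioo_mem_nhdsLT_of_mem (⟨ha0, le_rfl⟩ : a ∈ Ioc 0 a)] with x hx
        exact (hu'0 x hx).symm
      exact tendsto_nhds_unique h1 h2
    have hu''0 : ∀ r ∈ Ioo (0:ℝ) a, deriv (deriv u) r = 0 := by
      intro r hr
      have hev : deriv u =ᶠ[𝓝 r] (fun _ => 0) := by
        filter_upwards [isOpen_Ioo.mem_nhds hr] with x hx
        exact hu'0 x hx
      rw [hev.deriv_eq, deriv_const]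
    have hu''a : deriv (deriv u) a = 0 := by
      have h1 : Tendsto (deriv (deriv u)) (𝓝[<] a) (𝓝 (deriv (deriv u) a)) :=
        ((hcontu''.continuousAt (isOpen_Ioo.mem_nhds haI)).tendsto).mono_left nhdsWithin_le_nhds
      have h2 : Tendsto (deriv (deriv u)) (𝓝[<] a) (𝓝 0) := by
        apply Tendsto.congr' _ tendsto_const_nhds
        filter_upwards [Ioo_mem_nhdsLT_of_mem (⟨ha0, le_rfl⟩ : a ∈ Ioc 0 a)] with x hx
        exact (hu''0 x hx).symm
      exact tendsto_nhds_unique h1 h2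
    -- u < 1 strictly above a
    have hured : ∀ r ∈ Ioo a 1, u r < 1 := by
      intro r hr
      have hrI : r ∈ Ioo (0:ℝ) 1 := ⟨lt_trans ha0 hr.1, hr.2⟩
      rcases lt_or_eq_of_le (hub r (Ioo_subset_Ioc_self hrI)).2 with h | h
      · exact h
      exact absurd (le_csSup hSbdd (⟨hrI, h⟩ : r ∈ S)) (not_le.2 hr.1)
    -- f ∘ u vanishes above a
    have hfur : ∀ r ∈ Ioo a 1, f (u r) = 0 := by
      intro r hr
      have hrI : r ∈ Ioo (0:ℝ) 1 := ⟨lt_trans ha0 hr.1, hr.2⟩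
      refine le_antisymm ?_ (hstar r hrI)
      have hφ : Tendsto (fun x => -(deriv (deriv u) x) - ((n:ℝ)-1)/x * deriv u x) (𝓝[>] a) (𝓝 0) := by
        have hc : ContinuousAt (fun x => -(deriv (deriv u) x) - ((n:ℝ)-1)/x * deriv u x) a := by
          apply ContinuousAt.sub
          · exact (hcontu''.continuousAt (isOpen_Ioo.mem_nhds haI)).neg
          · exact (continuousAt_const.div continuousAt_id (ne_of_gt ha0)).mul
              (hcontu'.continuousAt (isOpen_Ioo.mem_nhds haI))
        have := hc.tendsto.mono_left (nhdsWithin_le_nhds (s := Ioi a))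
        simpa [hu'a, hu''a] using this
      apply ge_of_tendsto hφ
      filter_upwards [Ioo_mem_nhdsGT_of_mem (⟨le_rfl, hr.1⟩ : a ∈ Ico a r)] with x hx
      have hxI : x ∈ Ioo (0:ℝ) 1 := ⟨lt_trans ha0 hx.1, lt_trans hx.2 hr.2⟩
      have h1 : f (u r) ≤ f (u x) := by
        apply hfmono ⟨(hub r (Ioo_subset_Ioc_self hrI)).1, hured r hr⟩
          ⟨(hub x (Ioo_subset_Ioc_self hxI)).1, hured x ⟨hx.1, lt_trans hx.2 hr.2⟩⟩
        exact hUanti hxI hrI hx.2.le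
      rw [← heq x hxI] at h1
      exact h1
    -- G is therefore constant (equal to 0) above a, so u' = 0 above a
    have hGanti : AntitoneOn G (Ioo a 1) := by
      apply antitoneOn_of_deriv_nonpos (convex_Ioo a 1)
        (hGcont.mono (Ioo_subset_Ioo_left ha0.le))
      · rw [isOpen_Ioo.interior_eq]
        exact fun x hx => (hGd x ⟨lt_trans ha0 hx.1, hx.2⟩).differentiableAt.differentiableWithinAt
      · rw [isOpen_Ioo.interior_eq]
        intro x hx
        rw [(hGd x ⟨lt_trans ha0 hx.1, hx.2⟩).deriv, hfur x hx, mul_zero]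
    have hGconst : ∀ x ∈ Ioo a 1, ∀ y ∈ Ioo a 1, x ≤ y → G x = G y := fun x hx y hy hxy =>
      le_antisymm (hGmono ⟨lt_trans ha0 hx.1, hx.2⟩ ⟨lt_trans ha0 hy.1, hy.2⟩ hxy)
        (hGanti hx hy hxy)
    have hu'red : ∀ r ∈ Ioo a 1, deriv u r = 0 := by
      intro r hr
      have hrI : r ∈ Ioo (0:ℝ) 1 := ⟨lt_trans ha0 hr.1, hr.2⟩
      have hG1 : Tendsto G (𝓝[>] a) (𝓝 0) := by
        have hc : ContinuousAt G a :=
          (((continuous_pow (n-1)).continuousAt).mul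
            (hcontu'.continuousAt (isOpen_Ioo.mem_nhds haI))).neg
        have := hc.tendsto.mono_left (nhdsWithin_le_nhds (s := Ioi a))
        simpa [hGdef, hu'a] using this
      have hG2 : Tendsto G (𝓝[>] a) (𝓝 (G r)) := by
        apply Tendsto.congr' _ tendsto_const_nhds
        filter_upwards [Ioo_mem_nhdsGT_of_mem (⟨le_rfl, hr.1⟩ : a ∈ Ico a r)] with x hx
        exact (hGconst x ⟨hx.1, lt_trans hx.2 hr.2⟩ r hr hx.2.le).symm
      have hGr0 : G r = 0 := tendsto_nhds_unique hG2 hG1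
      simp only [hGdef, neg_eq_zero] at hGr0
      rcases mul_eq_zero.1 hGr0 with h | h
      · exact absurd h (pow_ne_zero _ (ne_of_gt hrI.1))
      · exact h
    -- so u is constant above a, with value 1 (from the left) and 0 (at 1): contradiction
    have humono2 : MonotoneOn u (Ioo a 1) := by
      apply monotoneOn_of_deriv_nonneg (convex_Ioo a 1)
        ((hcontu.mono Ioo_subset_Ioc_self).mono (Ioo_subset_Ioo_left ha0.le))
      · rw [isOpen_Ioo.interior_eq]
        exact fun x hx => (hdiffu x ⟨lt_trans ha0 hx.1, hx.2⟩).differentiableWithinAt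
      · rw [isOpen_Ioo.interior_eq]
        exact fun x hx => le_of_eq (hu'red x hx).symm
    have huconst : ∀ x ∈ Ioo a 1, ∀ y ∈ Ioo a 1, x ≤ y → u x = u y := fun x hx y hy hxy =>
      le_antisymm (humono2 hx hy hxy)
        (hUanti ⟨lt_trans ha0 hx.1, hx.2⟩ ⟨lt_trans ha0 hy.1, hy.2⟩ hxy)
    set m : ℝ := (a+1)/2 with hmdef
    have hm : m ∈ Ioo a 1 := ⟨by simp only [hmdef]; linarith, by simp only [hmdef]; linarith⟩
    have hum : u m = 1 := by
      have h1 : Tendsto u (𝓝[>] a) (𝓝 1) := by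
        have := (hdiffu a haI).continuousAt.tendsto.mono_left (nhdsWithin_le_nhds (s := Ioi a))
        rwa [hua] at this
      have h2 : Tendsto u (𝓝[>] a) (𝓝 (u m)) := by
        apply Tendsto.congr' _ tendsto_const_nhds
        filter_upwards [Ioo_mem_nhdsGT_of_mem (⟨le_rfl, hm.1⟩ : a ∈ Ico a m)] with x hx
        exact (huconst x ⟨hx.1, lt_trans hx.2 hm.2⟩ m hm hx.2.le).symm
      exact (tendsto_nhds_unique h1 h2).symm
    have hne : (𝓝[Ioo m 1] (1:ℝ)).NeBot := by
      rw [← mem_closure_iff_nhdsWithin_neBot, closure_Ioo (ne_of_lt hm.2)]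
      exact ⟨hm.2.le, le_rfl⟩
    have ht1 : Tendsto u (𝓝[Ioo m 1] 1) (𝓝 (u 1)) :=
      (hcontu 1 (right_mem_Ioc.2 one_pos)).mono_left
        (nhdsWithin_mono _ (fun x hx => ⟨lt_trans ha0 (lt_trans hm.1 hx.1), hx.2.le⟩))
    have ht2 : Tendsto u (𝓝[Ioo m 1] 1) (𝓝 1) := by
      apply Tendsto.congr' _ tendsto_const_nhds
      filter_upwards [self_mem_nhdsWithin] with x hx
      rw [← hum]
      exact huconst m hm x ⟨lt_trans hm.1 hx.1, hx.2⟩ hx.1.le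
    rw [hu1] at ht1
    exact zero_ne_one (tendsto_nhds_unique ht1 ht2)
  -- main argument
  intro t ht
  rcases eq_or_lt_of_le ht.2 with hteq | h1
  · rw [hteq]; simp
  have htI : t ∈ Ioo (0:ℝ) 1 := ⟨ht.1, h1⟩
  have hd0 : 0 ≤ f (u t) := hstar t htI
  have hcmp : ∀ x ∈ Ioo (0:ℝ) 1, ∀ y ∈ Ioo (0:ℝ) 1, x ≤ y → f (u y) ≤ f (u x) := by
    intro x hx y hy hxy
    exact hfmono ⟨(hub y (Ioo_subset_Ioc_self hy)).1, hlt1 y hy⟩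
      ⟨(hub x (Ioo_subset_Ioc_self hx)).1, hlt1 x hx⟩ (hUanti hx hy hxy)
  set F : ℝ → ℝ := fun x => (n:ℝ) * G x - f (u t) * x ^ n with hFdef
  have hFd : ∀ r ∈ Ioo (0:ℝ) 1, HasDerivAt F ((n:ℝ) * r^(n-1) * (f (u r) - f (u t))) r := by
    intro r hr
    have h2 : HasDerivAt F ((n:ℝ) * (r ^ (n-1) * f (u r)) - f (u t) * (↑n * r ^ (n-1))) r := ((hGd r hr).const_mul (n:ℝ)).sub ((hasDerivAt_pow n r).const_mul (f (u t)))
    convert h2 using 1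
    ring
  have hsub1 : Ioc (0:ℝ) t ⊆ Ioo 0 1 := fun x hx => ⟨hx.1, lt_of_le_of_lt hx.2 htI.2⟩
  have hsub2 : Ico t (1:ℝ) ⊆ Ioo 0 1 := fun x hx => ⟨lt_of_lt_of_le htI.1 hx.1, hx.2⟩
  have hFcont : ContinuousOn F (Ioo 0 1) :=
    (continuousOn_const.mul hGcont).sub (continuousOn_const.mul (continuousOn_pow n))
  have hFmono : MonotoneOn F (Ioc 0 t) := by
    apply monotoneOn_of_deriv_nonneg (convex_Ioc 0 t) (hFcont.mono hsub1)
    · rw [interior_Ioc]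
      exact fun x hx => (hFd x (hsub1 (Ioo_subset_Ioc_self hx))).differentiableAt.differentiableWithinAt
    · rw [interior_Ioc]
      intro x hx
      have hxI : x ∈ Ioo (0:ℝ) 1 := hsub1 (Ioo_subset_Ioc_self hx)
      rw [(hFd x hxI).deriv]
      have := hcmp x hxI t htI hx.2.le
      have hnn : (0:ℝ) ≤ (n:ℝ) * x^(n-1) := mul_nonneg (Nat.cast_nonneg n) (pow_nonneg hxI.1.le _)
      nlinarith
  have hFanti : AntitoneOn F (Ico t 1) := by
    apply antitoneOn_of_deriv_nonpos (convex_Ico t 1) (hFcont.mono hsub2)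
    · rw [interior_Ico]
      exact fun x hx => (hFd x (hsub2 (Ioo_subset_Ico_self hx))).differentiableAt.differentiableWithinAt
    · rw [interior_Ico]
      intro x hx
      have hxI : x ∈ Ioo (0:ℝ) 1 := hsub2 (Ioo_subset_Ico_self hx)
      rw [(hFd x hxI).deriv]
      have := hcmp t htI x hxI hx.1.le
      have hnn : (0:ℝ) ≤ (n:ℝ) * x^(n-1) := mul_nonneg (Nat.cast_nonneg n) (pow_nonneg hxI.1.le _)
      nlinarith
  -- the key inequality  f(u t) t^n ≤ n G t
  have hA : f (u t) * t ^ n ≤ (n:ℝ) * G t := by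
    have key : ∀ ε ∈ Ioo (0:ℝ) t, f (u t) * t^n - f (u t) * ε^n ≤ (n:ℝ) * G t := by
      intro ε hε
      have h2 := hFmono (⟨hε.1, hε.2.le⟩ : ε ∈ Ioc 0 t) ⟨htI.1, le_rfl⟩ hε.2.le
      simp only [hFdef] at h2
      have h3 : 0 ≤ G ε := hG0 ε ⟨hε.1, lt_trans hε.2 htI.2⟩
      have hn0 : (0:ℝ) ≤ (n:ℝ) := by positivity
      nlinarith [mul_nonneg hn0 h3]
    have htt : Tendsto (fun ε : ℝ => f (u t) * t^n - f (u t) * ε^n) (𝓝[>] 0)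
        (𝓝 (f (u t) * t^n)) := by
      have hco : Continuous (fun ε : ℝ => f (u t) * t^n - f (u t) * ε^n) :=
        continuous_const.sub (continuous_const.mul (continuous_pow n))
      have := (hco.tendsto 0).mono_left (nhdsWithin_le_nhds (s := Ioi (0:ℝ)))
      simpa [zero_pow (by omega : n ≠ 0)] using this
    apply le_of_tendsto htt
    filter_upwards [Ioo_mem_nhdsGT_of_mem (⟨le_rfl, htI.1⟩ : (0:ℝ) ∈ Ico 0 t)] with ε hε
    exact key ε hε
  -- comparison at all y ∈ [t,1)
  have hmain : ∀ y ∈ Ico t (1:ℝ), t * -(deriv u y) ≤ y * -(deriv u t) := by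
    intro y hy
    have hyI : y ∈ Ioo (0:ℝ) 1 := hsub2 hy
    have hkey2 : t^n * G y ≤ G t * y^n := by
      have h2 := hFanti (left_mem_Ico.2 htI.2) hy hy.1
      simp only [hFdef] at h2
      have hyn : t^n ≤ y^n := pow_le_pow_left₀ htI.1.le hy.1 n
      have h4 : f (u t) * t^n * (y^n - t^n) ≤ (n:ℝ) * G t * (y^n - t^n) :=
        mul_le_mul_of_nonneg_right hA (by linarith)
      have htn : (0:ℝ) < t^n := pow_pos htI.1 n
      have hnpos : (0:ℝ) < (n:ℝ) := by
        have : (2:ℝ) ≤ (n:ℝ) := by exact_mod_cast hn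
        linarith
      have h6 := mul_le_mul_of_nonneg_right h2 htn.le
      have h7 : (n:ℝ) * (t^n * G y) ≤ (n:ℝ) * (G t * y^n) := by nlinarith
      exact le_of_mul_le_mul_left h7 hnpos
    simp only [hGdef] at hkey2
    have e1 : t^n = t^(n-1) * t := by rw [← pow_succ]; congr 1; omega
    have e2 : y^n = y^(n-1) * y := by rw [← pow_succ]; congr 1; omega
    have hc : (0:ℝ) < t^(n-1) * y^(n-1) := mul_pos (pow_pos htI.1 _) (pow_pos hyI.1 _)
    have h3 : (t^(n-1) * y^(n-1)) * (t * -(deriv u y)) ≤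
        (t^(n-1) * y^(n-1)) * (y * -(deriv u t)) := by
      calc (t^(n-1) * y^(n-1)) * (t * -(deriv u y)) = t^n * -(y^(n-1) * deriv u y) := by
            rw [e1]; ring
        _ ≤ -(t^(n-1) * deriv u t) * y^n := hkey2
        _ = (t^(n-1) * y^(n-1)) * (y * -(deriv u t)) := by rw [e2]; ring
    exact le_of_mul_le_mul_left h3 hc
  -- pass to the limit y → 1⁻
  by_cases hdiff1 : DifferentiableAt ℝ u 1
  · have hUD : UniqueDiffOn ℝ (Ioc (0:ℝ) 1) := uniqueDiffOn_Ioc 0 1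
    have hdW : ContinuousOn (derivWithin u (Ioc 0 1)) (Ioc 0 1) :=
      hu.continuousOn_derivWithin hUD (by norm_num)
    have hdW1 : derivWithin u (Ioc 0 1) 1 = deriv u 1 :=
      hdiff1.derivWithin (hUD 1 (right_mem_Ioc.2 one_pos))
    have hneB : (𝓝[Ioo t 1] (1:ℝ)).NeBot := by
      rw [← mem_closure_iff_nhdsWithin_neBot, closure_Ioo (ne_of_lt htI.2)]
      exact ⟨htI.2.le, le_rfl⟩
    have hlim : Tendsto (deriv u) (𝓝[Ioo t 1] 1) (𝓝 (deriv u 1)) := by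
      have h2 : Tendsto (derivWithin u (Ioc 0 1)) (𝓝[Ioc 0 1] 1) (𝓝 (deriv u 1)) := by
        have := hdW 1 (right_mem_Ioc.2 one_pos)
        rw [ContinuousWithinAt, hdW1] at this
        exact this
      have h3 := h2.mono_left
        (nhdsWithin_mono _ (fun x (hx : x ∈ Ioo t 1) => ⟨lt_trans htI.1 hx.1, hx.2.le⟩))
      apply h3.congr'
      filter_upwards [self_mem_nhdsWithin] with x hx
      exact derivWithin_of_mem_nhds (mem_of_superset
        (isOpen_Ioo.mem_nhds (⟨lt_trans htI.1 hx.1, hx.2⟩ : x ∈ Ioo (0:ℝ) 1))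
        Ioo_subset_Ioc_self)
    have hd1le : deriv u 1 ≤ 0 := by
      apply le_of_tendsto hlim
      filter_upwards [self_mem_nhdsWithin] with x hx
      exact hu'nonpos x ⟨lt_trans htI.1 hx.1, hx.2⟩
    have hfinal : t * -(deriv u 1) ≤ 1 * -(deriv u t) := by
      apply le_of_tendsto_of_tendsto ((hlim.neg).const_mul t)
        (((continuous_id.mul continuous_const).tendsto 1).mono_left nhdsWithin_le_nhds)
      filter_upwards [self_mem_nhdsWithin] with x hx
      exact hmain x ⟨hx.1.le, hx.2⟩
    rw [abs_of_nonpos hd1le, abs_of_nonpos (hu'nonpos t htI)]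
    linarith
  · rw [deriv_zero_of_not_differentiableAt hdiff1]
    simp [abs_nonneg]
end

section
/- Let n ≥ 2 and let u : (0,1] → ℝ be a C² radial solution of -u''(r) - (n-1)/r · u'(r) = f(u(r)) on (0,1) with u(1) = 0, 0 ≤ u ≤ 1, where f : [0,1) → [0,∞) is C¹ and nondecreasing. Then |u'(1)| ≤ 2. -/
open Set Filter Topology

set_option maxHeartbeats 2000000

/-- For a C² radial solution `u` of `-u'' - (n-1)/r u' = f(u)` on
`(0,1)` with `u(1)=0`, `0 ≤ u ≤ 1` and `f ≥ 0` C¹ nondecreasing, `|u'(1)| ≤ 2`. -/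
theorem stmt_11 (n : ℕ) (hn : 2 ≤ n) (u f : ℝ → ℝ)
    (hu : ContDiffOn ℝ 2 u (Set.Ioc 0 1)) (hu1 : u 1 = 0)
    (hub : ∀ r ∈ Set.Ioc (0:ℝ) 1, 0 ≤ u r ∧ u r ≤ 1)
    (hf : ContDiffOn ℝ 1 f (Set.Ico 0 1))
    (hfpos : ∀ t ∈ Set.Ico (0:ℝ) 1, 0 ≤ f t)
    (hfmono : MonotoneOn f (Set.Ico 0 1))
    (heq : ∀ r ∈ Set.Ioo (0:ℝ) 1,
      -(deriv (deriv u) r) - ((n:ℝ) - 1) / r * deriv u r = f (u r)) :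
    |deriv u 1| ≤ 2 := by
  by_cases hdiff : DifferentiableAt ℝ u 1
  swap
  · simp [deriv_zero_of_not_differentiableAt hdiff]
  set a := deriv u 1 with ha
  set m := n - 1 with hmdef
  have hm1 : 1 ≤ m := by omega
  have hmcast : (m : ℝ) = (n : ℝ) - 1 := by
    rw [hmdef, Nat.cast_sub (by omega), Nat.cast_one]
  have hO : IsOpen (Ioo (0:ℝ) 1) := isOpen_Ioo
  have hsub : Ioo (0:ℝ) 1 ⊆ Ioc 0 1 := Ioo_subset_Ioc_self
  have hu' : ContDiffOn ℝ 2 u (Ioo 0 1) := hu.mono hsub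
  have hdiffIoo : ∀ r ∈ Ioo (0:ℝ) 1, DifferentiableAt ℝ u r := fun r hr =>
    (hu'.contDiffAt (hO.mem_nhds hr)).differentiableAt (by norm_num)
  have hderiv_cd : ContDiffOn ℝ 1 (deriv u) (Ioo 0 1) :=
    hu'.deriv_of_isOpen hO (by norm_num)
  have hdd : ∀ r ∈ Ioo (0:ℝ) 1, DifferentiableAt ℝ (deriv u) r := fun r hr =>
    (hderiv_cd.contDiffAt (hO.mem_nhds hr)).differentiableAt (by norm_num)
  have hd2cont : ContinuousOn (deriv (deriv u)) (Ioo 0 1) :=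
    hderiv_cd.continuousOn_deriv_of_isOpen hO le_rfl
  have hdcont : ContinuousOn (deriv u) (Ioo 0 1) := hderiv_cd.continuousOn
  -- ψ : the LHS of the equation
  set ψ : ℝ → ℝ := fun x => -(deriv (deriv u) x) - ((n:ℝ) - 1) / x * deriv u x with hψdef
  have hψcont : ContinuousOn ψ (Ioo 0 1) := by
    apply hd2cont.neg.sub
    exact (continuousOn_const.div continuousOn_id (fun x hx => ne_of_gt hx.1)).mul hdcont
  set φ : ℝ → ℝ := derivWithin u (Ioc 0 1) with hφdef
  have hUD : UniqueDiffOn ℝ (Ioc (0:ℝ) 1) := uniqueDiffOn_Ioc 0 1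
  have hφcont : ContinuousOn φ (Ioc 0 1) :=
    hu.continuousOn_derivWithin hUD (by norm_num)
  have hφeq : ∀ r ∈ Ioo (0:ℝ) 1, φ r = deriv u r := fun r hr =>
    derivWithin_of_mem_nhds (Ioc_mem_nhds hr.1 hr.2)
  have hφ1 : φ 1 = a := hdiff.derivWithin (hUD 1 (right_mem_Ioc.2 one_pos))
  have hψeq : ∀ r ∈ Ioo (0:ℝ) 1, ψ r = f (u r) := fun r hr => heq r hr
  -- L1 : nonnegativity of f ∘ u on Ioo
  have hρ0 : ∀ r ∈ Ioo (0:ℝ) 1, 0 ≤ f (u r) := by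
    intro r hr
    obtain ⟨hur0, hur1⟩ := hub r (hsub hr)
    rcases hur1.lt_or_eq with h | h
    · exact hfpos _ ⟨hur0, h⟩
    · -- u r = 1
      by_cases hc : ∃ᶠ x in 𝓝[≠] r, x ∈ Ioo (0:ℝ) 1 ∧ u x < 1
      · by_contra hneg
        push_neg at hneg
        have hψr : ψ r < 0 := by rw [hψeq r hr]; exact hneg
        have hcontr : ContinuousAt ψ r := hψcont.continuousAt (hO.mem_nhds hr)
        have hev : ∀ᶠ x in 𝓝[≠] r, ψ x < 0 :=
          ((hcontr.eventually_lt_const hψr).filter_mono nhdsWithin_le_nhds)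
        obtain ⟨x, ⟨hxI, hxu⟩, hψx⟩ := (hc.and_eventually hev).exists
        have : 0 ≤ ψ x := by
          rw [hψeq x hxI]; exact hfpos _ ⟨(hub x (hsub hxI)).1, hxu⟩
        linarith
      · have h2 : ∀ᶠ x in 𝓝[≠] r, x ∈ Ioo (0:ℝ) 1 :=
          (eventually_mem_nhds_iff.mpr (hO.mem_nhds hr)).filter_mono nhdsWithin_le_nhds |>.mono
            (fun x hx => mem_of_mem_nhds hx)
        have h3 : ∀ᶠ x in 𝓝[≠] r, u x = 1 := by
          filter_upwards [not_frequently.mp hc, h2] with x hx hxI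
          rcases (hub x (hsub hxI)).2.lt_or_eq with h' | h'
          · exact absurd ⟨hxI, h'⟩ hx
          · exact h'
        have hE : ∀ᶠ x in 𝓝 r, u x = 1 := by
          rw [eventually_nhdsWithin_iff] at h3
          filter_upwards [h3] with x hx
          rcases eq_or_ne x r with h' | h'
          · rw [h', h]
          · exact hx h'
        obtain ⟨V, hVsub, hVopen, hrV⟩ := eventually_nhds_iff.1 hE
        have hderiv0 : ∀ x ∈ V, deriv u x = 0 := by
          intro x hx
          have hloc : u =ᶠ[𝓝 x] fun _ => (1:ℝ) := eventually_of_mem (hVopen.mem_nhds hx) hVsub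
          rw [hloc.deriv_eq, deriv_const]
        have hE2 : deriv u =ᶠ[𝓝 r] fun _ => (0:ℝ) :=
          eventually_of_mem (hVopen.mem_nhds hrV) hderiv0
        have hdd0 : deriv (deriv u) r = 0 := by rw [hE2.deriv_eq, deriv_const]
        rw [← heq r hr, hdd0, hderiv0 r hrV]
        simp
  -- the function g r = r^m * u'(r)
  set g : ℝ → ℝ := fun r => r ^ m * φ r with hgdef
  have hg1 : g 1 = a := by simp [hgdef, hφ1]
  have hgcont : ContinuousOn g (Ioc 0 1) := (continuous_pow m).continuousOn.mul hφcont
  have hgderiv : ∀ r ∈ Ioo (0:ℝ) 1, HasDerivAt g (-(r ^ m * f (u r))) r := by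
    intro r hr
    have hrm : r ^ m = r ^ (m - 1) * r := by
      conv_lhs => rw [show m = (m - 1) + 1 by omega, pow_succ]
    have h1 : HasDerivAt (fun x => x ^ m * deriv u x)
        ((m:ℝ) * r ^ (m - 1) * deriv u r + r ^ m * deriv (deriv u) r) r :=
      (hasDerivAt_pow m r).mul (hdd r hr).hasDerivAt
    have hevg : g =ᶠ[𝓝 r] fun x => x ^ m * deriv u x := by
      filter_upwards [hO.mem_nhds hr] with x hx
      rw [hgdef]; simp only
      rw [hφeq x hx]
    have h2 := h1.congr_of_eventuallyEq hevg
    refine h2.congr_deriv ?_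
    have hddr : deriv (deriv u) r = -(f (u r)) - ((n:ℝ) - 1) / r * deriv u r := by
      have := heq r hr; linarith
    rw [hddr, ← hmcast]
    have hrne : r ≠ 0 := ne_of_gt hr.1
    field_simp [hrm]
    rw [hrm]
    ring
  have hgdiffOn : DifferentiableOn ℝ g (Ioo 0 1) := fun x hx =>
    ((hgderiv x hx).differentiableAt).differentiableWithinAt
  have hIoc : interior (Ioc (0:ℝ) 1) = Ioo 0 1 := interior_Ioc
  have hgAnti : AntitoneOn g (Ioc 0 1) := by
    apply antitoneOn_of_deriv_nonpos (convex_Ioc 0 1) hgcont (by rw [hIoc]; exact hgdiffOn)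
    intro x hx
    rw [hIoc] at hx
    rw [(hgderiv x hx).deriv]
    have : 0 ≤ x ^ m * f (u x) := mul_nonneg (pow_nonneg hx.1.le m) (hρ0 x hx)
    linarith
  -- g is nonpositive on Ioc 0 1
  have hg_nonpos : ∀ s ∈ Ioc (0:ℝ) 1, g s ≤ 0 := by
    intro s hs
    by_contra hpos
    push_neg at hpos
    set c := g s with hcdef
    have hc : 0 < c := hpos
    have hkey : ∀ x ∈ Ioo (0:ℝ) s, c * x⁻¹ ≤ deriv u x := by
      intro x hx
      have hxpos : 0 < x := hx.1
      have hxI : x ∈ Ioc (0:ℝ) 1 := ⟨hxpos, hx.2.le.trans hs.2⟩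
      have hxO : x ∈ Ioo (0:ℝ) 1 := ⟨hxpos, lt_of_lt_of_le hx.2 hs.2⟩
      have hgx' : c ≤ x ^ m * φ x := hgAnti hxI hs hx.2.le
      have hpow : x ^ m ≤ x := by
        calc x ^ m ≤ x ^ 1 := pow_le_pow_of_le_one hxpos.le hxI.2 hm1
        _ = x := pow_one x
      have hφpos : 0 < φ x := by nlinarith [pow_pos hxpos m]
      have h2 : c ≤ x * φ x := le_trans hgx' (by nlinarith)
      rw [← hφeq x hxO]
      rw [mul_inv_le_iff₀ hxpos, mul_comm]
      exact h2
    set ε := s * Real.exp (-2 / c) with hεdef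
    have hexp1 : Real.exp (-2 / c) < 1 := Real.exp_lt_one_iff.2 (div_neg_of_neg_of_pos (by norm_num) hc)
    have hεpos : 0 < ε := mul_pos hs.1 (Real.exp_pos _)
    have hεs : ε < s := by
      calc ε < s * 1 := by
            apply mul_lt_mul_of_pos_left hexp1 hs.1
      _ = s := mul_one s
    have hIccsub : Icc ε s ⊆ Ioc (0:ℝ) 1 := fun x hx => ⟨lt_of_lt_of_le hεpos hx.1, hx.2.trans hs.2⟩
    have hIoosub : Ioo ε s ⊆ Ioo (0:ℝ) 1 :=
      fun x hx => ⟨lt_trans hεpos hx.1, lt_of_lt_of_le hx.2 hs.2⟩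
    set w : ℝ → ℝ := fun x => u x - c * Real.log x with hwdef
    have hwderiv : ∀ x ∈ Ioo ε s, HasDerivAt w (deriv u x - c * x⁻¹) x := by
      intro x hx
      exact ((hdiffIoo x (hIoosub hx)).hasDerivAt).sub
        ((Real.hasDerivAt_log (ne_of_gt (lt_trans hεpos hx.1))).const_mul c)
    have hwmono : MonotoneOn w (Icc ε s) := by
      apply monotoneOn_of_deriv_nonneg (convex_Icc ε s)
      · apply (hu.continuousOn.mono hIccsub).sub
        apply continuousOn_const.mul
        apply Real.continuousOn_log.mono
        intro x hx
        exact fun h => (ne_of_gt (lt_of_lt_of_le hεpos hx.1)) h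
      · rw [interior_Icc]
        exact fun x hx => (hwderiv x hx).differentiableAt.differentiableWithinAt
      · rw [interior_Icc]
        intro x hx
        rw [(hwderiv x hx).deriv]
        have := hkey x (Ioo_subset_Ioo_left hεpos.le hx)
        linarith
    have hwle : w ε ≤ w s :=
      hwmono (left_mem_Icc.2 hεs.le) (right_mem_Icc.2 hεs.le) hεs.le
    have hlogε : Real.log ε = Real.log s + (-2 / c) := by
      rw [hεdef, Real.log_mul (ne_of_gt hs.1) (Real.exp_ne_zero _), Real.log_exp]
    have hwε : w ε = u ε - c * Real.log s + 2 := by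
      rw [hwdef]; simp only
      rw [hlogε]
      field_simp
      ring
    have hws : w s = u s - c * Real.log s := rfl
    have huε := (hub ε (hIccsub (left_mem_Icc.2 hεs.le))).1
    have hus := (hub s hs).2
    rw [hwε, hws] at hwle
    linarith
  have ha_le : a ≤ 0 := hg1 ▸ hg_nonpos 1 (right_mem_Ioc.2 one_pos)
  -- u is antitone
  have hu_anti : AntitoneOn u (Ioc 0 1) := by
    apply antitoneOn_of_deriv_nonpos (convex_Ioc 0 1) hu.continuousOn
      (by rw [hIoc]; exact fun x hx => (hdiffIoo x hx).differentiableWithinAt)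
    intro x hx
    rw [hIoc] at hx
    have hgx : g x ≤ 0 := hg_nonpos x (hsub hx)
    have hxm : 0 < x ^ m := pow_pos hx.1 m
    rw [← hφeq x hx]
    have hgx' : x ^ m * φ x ≤ 0 := hgx
    nlinarith [hgx', hxm]
  have hnR : (0:ℝ) < n := by exact_mod_cast (by omega : 0 < n)
  have hnne : (n:ℝ) ≠ 0 := ne_of_gt hnR
  by_cases hA : ∀ r ∈ Ioo (0:ℝ) 1, u r < 1
  · -- Case A : u < 1 on the open interval
    have huIco : ∀ x ∈ Ioo (0:ℝ) 1, u x ∈ Ico (0:ℝ) 1 := fun x hx =>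
      ⟨(hub x (hsub hx)).1, hA x hx⟩
    have hkey : ∀ s ∈ Ioo (0:ℝ) 1, φ s ≤ a * s := by
      intro s hsI
      have hs0 : 0 < s := hsI.1
      have hs1 : s < 1 := hsI.2
      set F := f (u s) with hFdef
      have hFnn : 0 ≤ F := hfpos _ (huIco s hsI)
      set H : ℝ → ℝ := fun r => g r + F / n * r ^ n with hHdef
      have hHderiv : ∀ r ∈ Ioo (0:ℝ) 1, HasDerivAt H (r ^ m * (F - f (u r))) r := by
        intro r hr
        have h1 := (hgderiv r hr).add ((hasDerivAt_pow n r).const_mul (F / n))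
        refine h1.congr_deriv ?_
        rw [← hmdef]
        field_simp
        ring
      have hHcont : ContinuousOn H (Ioc 0 1) :=
        hgcont.add (continuousOn_const.mul (continuous_pow n).continuousOn)
      have hHanti : AntitoneOn H (Ioc 0 s) := by
        have hsub2 : Ioo (0:ℝ) s ⊆ Ioo 0 1 := fun x hx => ⟨hx.1, lt_of_lt_of_le hx.2 hs1.le⟩
        apply antitoneOn_of_deriv_nonpos (convex_Ioc 0 s)
          (hHcont.mono (Ioc_subset_Ioc_right hs1.le))
        · rw [interior_Ioc]
          exact fun x hx => (hHderiv x (hsub2 hx)).differentiableAt.differentiableWithinAt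
        · rw [interior_Ioc]
          intro x hx
          rw [(hHderiv x (hsub2 hx)).deriv]
          have hux : u s ≤ u x :=
            hu_anti ⟨hx.1, hx.2.le.trans hs1.le⟩ ⟨hs0, hs1.le⟩ hx.2.le
          have hFle : F ≤ f (u x) := hfmono (huIco s hsI) (huIco x (hsub2 hx)) hux
          nlinarith [pow_nonneg hx.1.le m]
      have hHmono : MonotoneOn H (Icc s 1) := by
        have hsub3 : Ioo s 1 ⊆ Ioo (0:ℝ) 1 := fun x hx => ⟨lt_trans hs0 hx.1, hx.2⟩
        have hsub4 : Icc s 1 ⊆ Ioc (0:ℝ) 1 := fun x hx => ⟨lt_of_lt_of_le hs0 hx.1, hx.2⟩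
        apply monotoneOn_of_deriv_nonneg (convex_Icc s 1) (hHcont.mono hsub4)
        · rw [interior_Icc]
          exact fun x hx => (hHderiv x (hsub3 hx)).differentiableAt.differentiableWithinAt
        · rw [interior_Icc]
          intro x hx
          rw [(hHderiv x (hsub3 hx)).deriv]
          have hux : u x ≤ u s :=
            hu_anti ⟨hs0, hs1.le⟩ ⟨lt_trans hs0 hx.1, hx.2.le⟩ hx.1.le
          have hFle : f (u x) ≤ F := hfmono (huIco x (hsub3 hx)) (huIco s hsI) hux
          nlinarith [pow_nonneg (lt_trans hs0 hx.1).le m]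
      have hb1 : g s + F / n * s ^ n ≤ 0 := by
        have hev : ∀ᶠ ε in 𝓝[>] (0:ℝ), g s + F / n * s ^ n ≤ F / n * ε ^ n := by
          filter_upwards [Ioo_mem_nhdsGT_of_mem (left_mem_Ico.2 hs0)] with ε hε
          have h := hHanti ⟨hε.1, hε.2.le⟩ (right_mem_Ioc.2 hs0) hε.2.le
          have hgε : g ε ≤ 0 := hg_nonpos ε ⟨hε.1, hε.2.le.trans hs1.le⟩
          have h' : g s + F / n * s ^ n ≤ g ε + F / n * ε ^ n := h
          linarith
        have htend : Tendsto (fun ε : ℝ => F / n * ε ^ n) (𝓝[>] 0) (𝓝 0) := by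
          have h0 : Tendsto (fun ε : ℝ => F / n * ε ^ n) (𝓝 0) (𝓝 (F / n * 0 ^ n)) :=
            (continuous_const.mul (continuous_pow n)).tendsto 0
          rw [zero_pow (by omega : n ≠ 0), mul_zero] at h0
          exact h0.mono_left nhdsWithin_le_nhds
        exact ge_of_tendsto htend hev
      have hb2 : g s + F / n * s ^ n ≤ a + F / n := by
        have h := hHmono (left_mem_Icc.2 hs1.le) (right_mem_Icc.2 hs1.le) hs1.le
        have h' : g s + F / n * s ^ n ≤ g 1 + F / n * 1 ^ n := h
        rw [hg1, one_pow, mul_one] at h'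
        exact h'
      have hgs : g s ≤ a * s ^ n := by
        rcases le_or_gt (F / n) (-a) with hcase | hcase
        · nlinarith [pow_le_one₀ hs0.le hs1.le (n := n), pow_nonneg hs0.le n]
        · nlinarith [pow_nonneg hs0.le n]
      have hsm : 0 < s ^ m := pow_pos hs0 m
      have hsn : s ^ n = s ^ m * s := by
        conv_lhs => rw [show n = m + 1 by omega, pow_succ]
      have hgs' : s ^ m * φ s ≤ a * (s ^ m * s) := by rw [← hsn]; exact hgs
      have h2 : s ^ m * φ s ≤ s ^ m * (a * s) := by linarith [hgs']
      exact (mul_le_mul_iff_right₀ hsm).1 h2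
    -- integrate : P r = u r - a/2 r² is antitone
    set P : ℝ → ℝ := fun r => u r - a / 2 * r ^ 2 with hPdef
    have hPderiv : ∀ x ∈ Ioo (0:ℝ) 1, HasDerivAt P (deriv u x - a / 2 * (2 * x ^ 1)) x :=
      fun x hx => (hdiffIoo x hx).hasDerivAt.sub ((hasDerivAt_pow 2 x).const_mul (a / 2))
    have hPanti : AntitoneOn P (Ioc 0 1) := by
      apply antitoneOn_of_deriv_nonpos (convex_Ioc 0 1)
        (hu.continuousOn.sub (continuousOn_const.mul (continuous_pow 2).continuousOn))
      · rw [hIoc]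
        exact fun x hx => (hPderiv x hx).differentiableAt.differentiableWithinAt
      · rw [hIoc]
        intro x hx
        show deriv P x ≤ 0
        rw [(hPderiv x hx).deriv]
        have h1 := hkey x hx
        rw [hφeq x hx] at h1
        rw [pow_one]
        linarith
    have hfin : ∀ᶠ ε in 𝓝[>] (0:ℝ), -(a / 2) ≤ 1 - a / 2 * ε ^ 2 := by
      filter_upwards [Ioo_mem_nhdsGT_of_mem (left_mem_Ico.2 one_pos)] with ε hε
      have h := hPanti ⟨hε.1, hε.2.le⟩ (right_mem_Ioc.2 one_pos) hε.2.le
      have h' : u 1 - a / 2 * 1 ^ 2 ≤ u ε - a / 2 * ε ^ 2 := h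
      have huε := (hub ε ⟨hε.1, hε.2.le⟩).2
      rw [hu1, one_pow, mul_one] at h'
      linarith
    have htend : Tendsto (fun ε : ℝ => 1 - a / 2 * ε ^ 2) (𝓝[>] (0:ℝ)) (𝓝 1) := by
      have h0 : Tendsto (fun ε : ℝ => 1 - a / 2 * ε ^ 2) (𝓝 0) (𝓝 (1 - a / 2 * 0 ^ 2)) :=
        (continuous_const.sub (continuous_const.mul (continuous_pow 2))).tendsto 0
      norm_num at h0
      exact h0.mono_left nhdsWithin_le_nhds
    have hhalf : -(a / 2) ≤ 1 := ge_of_tendsto htend hfin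
    rw [abs_le]
    constructor <;> linarith
  · -- Case B : u attains the value 1
    push_neg at hA
    obtain ⟨s0, hs0I, hs0ge⟩ := hA
    have hus0 : u s0 = 1 := le_antisymm (hub s0 (hsub hs0I)).2 hs0ge
    set S : Set ℝ := {r : ℝ | r ∈ Ioc (0:ℝ) 1 ∧ u r = 1} with hSdef
    have hs0S : s0 ∈ S := ⟨hsub hs0I, hus0⟩
    have hbdd : BddAbove S := ⟨1, fun x hx => hx.1.2⟩
    have hSne : S.Nonempty := ⟨s0, hs0S⟩
    set s1 := sSup S with hs1def
    have hs1ge : s0 ≤ s1 := le_csSup hbdd hs0S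
    have hs1pos : 0 < s1 := lt_of_lt_of_le hs0I.1 hs1ge
    have hs1le : s1 ≤ 1 := csSup_le hSne fun x hx => hx.1.2
    have hs1Ioc : s1 ∈ Ioc (0:ℝ) 1 := ⟨hs1pos, hs1le⟩
    have huleft : ∀ r ∈ Ioo (0:ℝ) s1, u r = 1 := by
      intro r hr
      obtain ⟨x, hxS, hrx⟩ := exists_lt_of_lt_csSup hSne hr.2
      have hrIoc : r ∈ Ioc (0:ℝ) 1 := ⟨hr.1, (hr.2.trans_le hs1le).le⟩
      refine le_antisymm (hub r hrIoc).2 ?_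
      calc (1:ℝ) = u x := hxS.2.symm
      _ ≤ u r := hu_anti hrIoc hxS.1 hrx.le
    haveI neBotL : (𝓝[Ioo (0:ℝ) s1] s1).NeBot := by
      apply mem_closure_iff_nhdsWithin_neBot.1
      rw [closure_Ioo (ne_of_lt hs1pos)]
      exact ⟨hs1pos.le, le_rfl⟩
    have hus1 : u s1 = 1 := by
      have ht1 : Tendsto u (𝓝[Ioo (0:ℝ) s1] s1) (𝓝 (u s1)) :=
        (hu.continuousOn s1 hs1Ioc).mono (fun x hx => ⟨hx.1, hx.2.le.trans hs1le⟩)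
      have ht2 : Tendsto u (𝓝[Ioo (0:ℝ) s1] s1) (𝓝 1) := by
        apply Tendsto.congr' _ tendsto_const_nhds
        filter_upwards [self_mem_nhdsWithin] with x hx
        exact (huleft x hx).symm
      exact tendsto_nhds_unique ht1 ht2
    have hs1lt1 : s1 < 1 :=
      lt_of_le_of_ne hs1le (fun h => by rw [h, hu1] at hus1; norm_num at hus1)
    have hs1Ioo : s1 ∈ Ioo (0:ℝ) 1 := ⟨hs1pos, hs1lt1⟩
    have hzero_left : ∀ r ∈ Ioo (0:ℝ) s1, deriv u r = 0 := by
      intro r hr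
      have hloc : u =ᶠ[𝓝 r] fun _ => (1:ℝ) :=
        eventually_of_mem (isOpen_Ioo.mem_nhds hr) huleft
      rw [hloc.deriv_eq, deriv_const]
    have hzero2_left : ∀ r ∈ Ioo (0:ℝ) s1, deriv (deriv u) r = 0 := by
      intro r hr
      have hloc : deriv u =ᶠ[𝓝 r] fun _ => (0:ℝ) :=
        eventually_of_mem (isOpen_Ioo.mem_nhds hr) hzero_left
      rw [hloc.deriv_eq, deriv_const]
    have hψ_left : ∀ r ∈ Ioo (0:ℝ) s1, ψ r = 0 := by
      intro r hr
      show -(deriv (deriv u) r) - ((n:ℝ) - 1) / r * deriv u r = 0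
      rw [hzero_left r hr, hzero2_left r hr]
      ring
    have hψs1 : ψ s1 = 0 := by
      have ht1 : Tendsto ψ (𝓝[Ioo (0:ℝ) s1] s1) (𝓝 (ψ s1)) :=
        (hψcont s1 hs1Ioo).mono (fun x hx => ⟨hx.1, hx.2.trans hs1lt1⟩)
      have ht2 : Tendsto ψ (𝓝[Ioo (0:ℝ) s1] s1) (𝓝 0) := by
        apply Tendsto.congr' _ tendsto_const_nhds
        filter_upwards [self_mem_nhdsWithin] with x hx
        exact (hψ_left x hx).symm
      exact tendsto_nhds_unique ht1 ht2
    haveI neBotR : (𝓝[Ioo s1 1] s1).NeBot := by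
      apply mem_closure_iff_nhdsWithin_neBot.1
      rw [closure_Ioo (ne_of_lt hs1lt1)]
      exact ⟨le_rfl, hs1lt1.le⟩
    have huright : ∀ r ∈ Ioo s1 (1:ℝ), u r < 1 := by
      intro r hr
      refine lt_of_le_of_ne (hub r ⟨lt_trans hs1pos hr.1, hr.2.le⟩).2 (fun h => ?_)
      have : r ≤ s1 := le_csSup hbdd ⟨⟨lt_trans hs1pos hr.1, hr.2.le⟩, h⟩
      exact absurd this (not_le.2 hr.1)
    have hsubR : Ioo s1 (1:ℝ) ⊆ Ioo (0:ℝ) 1 := fun x hx => ⟨lt_trans hs1pos hx.1, hx.2⟩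
    have hfzero : ∀ t ∈ Ico (0:ℝ) 1, f t = 0 := by
      intro t ht
      refine le_antisymm ?_ (hfpos t ht)
      have htu : Tendsto u (𝓝[Ioo s1 (1:ℝ)] s1) (𝓝 1) := by
        have ht0 : Tendsto u (𝓝[Ioo s1 (1:ℝ)] s1) (𝓝 (u s1)) :=
          (hu.continuousOn s1 hs1Ioc).mono (fun x hx => hsub (hsubR hx))
        rwa [hus1] at ht0
      have hev1 : ∀ᶠ x in 𝓝[Ioo s1 (1:ℝ)] s1, t < u x :=
        htu.eventually (eventually_gt_nhds ht.2)
      have hev : ∀ᶠ x in 𝓝[Ioo s1 (1:ℝ)] s1, f t ≤ ψ x := by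
        filter_upwards [hev1, self_mem_nhdsWithin] with x hx1 hx2
        have hxIoo : x ∈ Ioo (0:ℝ) 1 := hsubR hx2
        have hux : u x ∈ Ico (0:ℝ) 1 := ⟨(hub x (hsub hxIoo)).1, huright x hx2⟩
        have h := hfmono ht hux hx1.le
        rwa [← hψeq x hxIoo] at h
      have htψ : Tendsto ψ (𝓝[Ioo s1 (1:ℝ)] s1) (𝓝 0) := by
        have ht0 : Tendsto ψ (𝓝[Ioo s1 (1:ℝ)] s1) (𝓝 (ψ s1)) :=
          (hψcont s1 hs1Ioo).mono hsubR
        rwa [hψs1] at ht0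
      exact ge_of_tendsto htψ hev
    have hρzero : ∀ r ∈ Ioo (0:ℝ) 1, f (u r) = 0 := by
      intro r hr
      obtain ⟨h0, h1⟩ := hub r (hsub hr)
      rcases h1.lt_or_eq with h | h
      · exact hfzero _ ⟨h0, h⟩
      · have hrS : r ∈ S := ⟨hsub hr, h⟩
        have hrle : r ≤ s1 := le_csSup hbdd hrS
        rcases hrle.lt_or_eq with h' | h'
        · rw [← hψeq r hr]; exact hψ_left r ⟨hr.1, h'⟩
        · rw [← hψeq r hr, h']; exact hψs1
    have hgmono : MonotoneOn g (Ioc 0 1) := by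
      apply monotoneOn_of_deriv_nonneg (convex_Ioc 0 1) hgcont (by rw [hIoc]; exact hgdiffOn)
      intro x hx
      rw [hIoc] at hx
      rw [(hgderiv x hx).deriv, hρzero x hx]
      simp
    have hx0 : s1 / 2 ∈ Ioo (0:ℝ) s1 := ⟨by positivity, by linarith⟩
    have hx0I : s1 / 2 ∈ Ioc (0:ℝ) 1 := ⟨hx0.1, by linarith⟩
    have hgx0 : g (s1 / 2) = 0 := by
      have h1 : φ (s1 / 2) = 0 := by
        rw [hφeq _ ⟨hx0.1, by linarith⟩]
        exact hzero_left _ hx0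
      show (s1 / 2) ^ m * φ (s1 / 2) = 0
      rw [h1, mul_zero]
    have hge : 0 ≤ a := by
      have h := hgmono hx0I (right_mem_Ioc.2 one_pos) (by linarith : s1 / 2 ≤ 1)
      rwa [hg1, hgx0] at h
    rw [abs_le]
    constructor <;> linarith
end

section
/- Let n ≥ 7 and define u(x) = 1 - |x| on the unit ball B₁ ⊂ ℝⁿ and f(t) = (n-1)/(1-t) for t ∈ [0,1). Then u satisfies -Δu = f(u) in B₁ \ {0}, u = 0 on ∂B₁, 0 ≤ u ≤ 1, and ‖u‖_{L^∞(B₁)} = 1 (so u is not regular). -/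
open Set MeasureTheory

section aux

variable {n : ℕ}

local notation "E" => EuclideanSpace ℝ (Fin n)

lemma aux_norm_hasFDerivAt (x : E) (hx : x ≠ 0) :
    HasFDerivAt (fun y : E => ‖y‖) (‖x‖⁻¹ • innerSL ℝ x) x := by
  have hx' : ‖x‖ ≠ 0 := norm_ne_zero_iff.2 hx
  have h2 : HasFDerivAt (fun y : E => ‖y‖ ^ 2) (2 • innerSL ℝ x) x :=
    (hasStrictFDerivAt_norm_sq x).hasFDerivAt
  have hsq : HasFDerivAt (fun y : E => Real.sqrt (‖y‖ ^ 2))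
      ((1 / (2 * Real.sqrt (‖x‖ ^ 2))) • (2 • innerSL ℝ x)) x :=
    (Real.hasDerivAt_sqrt (by positivity)).comp_hasFDerivAt x h2
  have heq : (fun y : E => ‖y‖) = fun y : E => Real.sqrt (‖y‖ ^ 2) := by
    funext y; rw [Real.sqrt_sq (norm_nonneg y)]
  rw [heq]
  refine hsq.congr_fderiv ?_
  ext v
  simp only [ContinuousLinearMap.coe_smul', Pi.smul_apply, ContinuousLinearMap.smul_apply,
    Real.sqrt_sq (norm_nonneg x), two_smul, ContinuousLinearMap.add_apply, smul_eq_mul]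
  field_simp
  ring

end aux

/-- For `n ≥ 7`, `u(x) = 1 - |x|` and `f(t) = (n-1)/(1-t)`, the
function `u` solves `-Δu = f(u)` in `B₁ \ {0}` (the Laplacian written as the sum
of second partial derivatives), vanishes on `∂B₁`, satisfies `0 ≤ u ≤ 1` on
`B₁`, and `‖u‖_{L^∞(B₁)} = 1`, so `u` is not regular. -/
theorem stmt_13 (n : ℕ) (hn : 7 ≤ n)
    (u : EuclideanSpace ℝ (Fin n) → ℝ) (hu : ∀ x, u x = 1 - ‖x‖)
    (f : ℝ → ℝ) (hf : ∀ t : ℝ, t < 1 → f t = ((n:ℝ) - 1) / (1 - t)) :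
    (∀ x : EuclideanSpace ℝ (Fin n), x ≠ 0 → ‖x‖ < 1 →
      -(∑ i : Fin n, fderiv ℝ (fun y => fderiv ℝ u y (EuclideanSpace.single i 1)) x
          (EuclideanSpace.single i 1)) = f (u x)) ∧
    (∀ x : EuclideanSpace ℝ (Fin n), ‖x‖ = 1 → u x = 0) ∧
    (∀ x : EuclideanSpace ℝ (Fin n), ‖x‖ ≤ 1 → 0 ≤ u x ∧ u x ≤ 1) ∧
    sSup ((fun x => |u x|) '' Metric.ball (0 : EuclideanSpace ℝ (Fin n)) 1) = 1 := by
  have hueq : u = fun y => 1 - ‖y‖ := funext hu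
  -- first derivative
  have hfd1 : ∀ y : EuclideanSpace ℝ (Fin n), y ≠ 0 → ∀ i : Fin n,
      fderiv ℝ u y (EuclideanSpace.single i 1) = -(y i * ‖y‖⁻¹) := by
    intro y hy i
    have hU : HasFDerivAt u (0 - ‖y‖⁻¹ • innerSL ℝ y) y := by
      rw [hueq]
      exact (hasFDerivAt_const (1 : ℝ) y).sub (aux_norm_hasFDerivAt y hy)
    rw [hU.fderiv]
    simp [EuclideanSpace.inner_single_right, mul_comm]
  refine ⟨?_, ?_, ?_, ?_⟩
  · intro x hx hx1
    have hx' : (0:ℝ) < ‖x‖ := norm_pos_iff.2 hx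
    have hxne : ‖x‖ ≠ 0 := ne_of_gt hx'
    -- second derivatives
    have hfd2 : ∀ i : Fin n,
        fderiv ℝ (fun y => fderiv ℝ u y (EuclideanSpace.single i 1)) x
          (EuclideanSpace.single i 1) = x i ^ 2 * ((‖x‖^2)⁻¹ * ‖x‖⁻¹) - ‖x‖⁻¹ := by
      intro i
      have hev : (fun y => fderiv ℝ u y (EuclideanSpace.single i 1)) =ᶠ[nhds x]
          (fun y => -(y i * ‖y‖⁻¹)) := by
        filter_upwards [IsOpen.mem_nhds isOpen_compl_singleton hx] with y hy
        exact hfd1 y hy i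
      rw [hev.fderiv_eq]
      have hc : HasFDerivAt (fun y : EuclideanSpace ℝ (Fin n) => y i)
          (innerSL ℝ (EuclideanSpace.single i (1:ℝ))) x := by
        have h : (fun y : EuclideanSpace ℝ (Fin n) => y i)
            = fun y => innerSL ℝ (EuclideanSpace.single i (1:ℝ)) y := by
          funext y
          simp [EuclideanSpace.inner_single_left]
        rw [h]
        exact (innerSL ℝ (EuclideanSpace.single i (1:ℝ))).hasFDerivAt
      have hd : HasFDerivAt (fun y : EuclideanSpace ℝ (Fin n) => ‖y‖⁻¹)
          ((-(‖x‖^2)⁻¹) • (‖x‖⁻¹ • innerSL ℝ x)) x :=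
        (hasDerivAt_inv hxne).comp_hasFDerivAt x (aux_norm_hasFDerivAt x hx)
      have hmul : HasFDerivAt (fun y : EuclideanSpace ℝ (Fin n) => -(y i * ‖y‖⁻¹)) _ x :=
        ((hc.mul hd).neg)
      rw [hmul.fderiv]
      simp only [ContinuousLinearMap.neg_apply, ContinuousLinearMap.add_apply,
        ContinuousLinearMap.smul_apply, innerSL_apply_apply, smul_eq_mul,
        EuclideanSpace.inner_single_right, EuclideanSpace.inner_single_left,
        RingHom.id_apply, starRingEnd_apply, star_one, star_trivial]
      simp [EuclideanSpace.single_apply]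
      ring
    have hsum : ∑ i : Fin n, x i ^ 2 = ‖x‖ ^ 2 := by
      rw [EuclideanSpace.norm_eq, Real.sq_sqrt (by positivity)]
      congr 1; funext i; rw [Real.norm_eq_abs, sq_abs]
    have hsumfd : ∑ i : Fin n, fderiv ℝ (fun y => fderiv ℝ u y (EuclideanSpace.single i 1)) x
        (EuclideanSpace.single i 1) = (1 - (n:ℝ)) * ‖x‖⁻¹ := by
      rw [Finset.sum_congr rfl (fun i _ => hfd2 i), Finset.sum_sub_distrib,
        ← Finset.sum_mul, hsum]
      simp only [Finset.sum_const, Finset.card_univ, Fintype.card_fin, nsmul_eq_mul]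
      field_simp
    rw [hsumfd, hu x, hf _ (by linarith)]
    have : (1:ℝ) - (1 - ‖x‖) = ‖x‖ := by ring
    rw [this]
    field_simp
    ring
  · intro x hx; rw [hu x, hx]; ring
  · intro x hx; rw [hu x]; constructor <;> [linarith; linarith [norm_nonneg x]]
  · have hmem : (1:ℝ) ∈ (fun x => |u x|) '' Metric.ball (0 : EuclideanSpace ℝ (Fin n)) 1 :=
      ⟨0, Metric.mem_ball_self one_pos, by simp [hu 0]⟩
    have hbd : ∀ r ∈ (fun x => |u x|) '' Metric.ball (0 : EuclideanSpace ℝ (Fin n)) 1,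
        r ≤ 1 := by
      rintro r ⟨x, hx, rfl⟩
      rw [Metric.mem_ball, dist_zero_right] at hx
      show |u x| ≤ 1
      rw [hu x, abs_of_nonneg (by linarith)]
      linarith [norm_nonneg x]
    exact le_antisymm (csSup_le ⟨1, hmem⟩ hbd) (le_csSup ⟨1, hbd⟩ hmem)
end

section
/- Let 2 ≤ n ≤ 6 and suppose u : (0,1] → ℝ is a C² radial solution of -u''-(n-1)u'/r = f(u) on (0,1) with u(1)=0, 0 ≤ u ≤ 1, f : [0,1) → [0,∞) C¹, F(t) = ∫₀ᵗ f ds with F(1) = +∞, and assume the decay bound |u'(t)| ≤ C_n|u'(1)| t^{-n/2+√(n-1)+1} for all t ∈ (0,1] (valid for stable solutions). Then u'(1)²/2 ≤ F(‖u‖_{L^∞}) ≤ M_n u'(1)² < +∞ for a dimensional constant M_n, and consequently ‖u‖_{L^∞(B₁)} < 1. -/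
open Set MeasureTheory

set_option maxHeartbeats 1600000 in
/-- Let `2 ≤ n ≤ 6` and let `u` be a C² radial solution of
`-u'' - (n-1)/r u' = f(u)` on `(0,1)` with `u(1)=0`, `0 ≤ u ≤ 1`, `f ≥ 0` C¹,
`F(1) = ∫₀¹ f = +∞`, satisfying the decay bound
`|u'(t)| ≤ Cₙ|u'(1)| t^(-n/2+√(n-1)+1)` on `(0,1]`. Then
`u'(1)²/2 ≤ F(‖u‖_∞) ≤ Mₙ u'(1)² < +∞` for a dimensional constant `Mₙ`, and
consequently `‖u‖_{L^∞} = sSup (u '' (0,1]) < 1`. -/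
theorem stmt_16 (n : ℕ) (hn2 : 2 ≤ n) (hn6 : n ≤ 6) (u f : ℝ → ℝ) (Cn : ℝ)
    (hu : ContDiffOn ℝ 2 u (Set.Ioc 0 1)) (hu1 : u 1 = 0)
    (hub : ∀ r ∈ Set.Ioc (0:ℝ) 1, 0 ≤ u r ∧ u r ≤ 1)
    (hf : ContDiffOn ℝ 1 f (Set.Ico 0 1))
    (hfpos : ∀ t ∈ Set.Ico (0:ℝ) 1, 0 ≤ f t)
    (hF1 : ∫⁻ s in Set.Ioo (0:ℝ) 1, ENNReal.ofReal (f s) = ⊤)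
    (heq : ∀ r ∈ Set.Ioo (0:ℝ) 1,
      -(deriv (deriv u) r) - ((n:ℝ) - 1) / r * deriv u r = f (u r))
    (hdecay : ∀ t ∈ Set.Ioc (0:ℝ) 1,
      |deriv u t| ≤ Cn * |deriv u 1| *
        t ^ (-(n:ℝ)/2 + Real.sqrt ((n:ℝ) - 1) + 1)) :
    (∃ Mn : ℝ,
      (deriv u 1) ^ 2 / 2 ≤ (∫ s in (0:ℝ)..(sSup (u '' Set.Ioc 0 1)), f s) ∧
      (∫ s in (0:ℝ)..(sSup (u '' Set.Ioc 0 1)), f s) ≤ Mn * (deriv u 1) ^ 2) ∧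
    sSup (u '' Set.Ioc 0 1) < 1 := by
  have hn2' : (2:ℝ) ≤ (n:ℝ) := by exact_mod_cast hn2
  have hn6' : (n:ℝ) ≤ 6 := by exact_mod_cast hn6
  have hn1 : (1:ℝ) ≤ (n:ℝ) - 1 := by linarith
  set a : ℝ := -(n:ℝ)/2 + Real.sqrt ((n:ℝ) - 1) + 1 with ha_def
  have ha : 0 < a := by
    have h : ((n:ℝ)/2 - 1) < Real.sqrt ((n:ℝ) - 1) := by
      rw [Real.lt_sqrt (by linarith)]
      nlinarith
    simp only [ha_def]
    linarith
  set d : ℝ := deriv u 1 with hd_def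
  set M : ℝ := sSup (u '' Set.Ioc 0 1) with hM_def
  have hucont : ContinuousOn u (Set.Ioc 0 1) := hu.continuousOn
  have hMne : (u '' Set.Ioc 0 1).Nonempty :=
    ⟨u 1, mem_image_of_mem u ⟨zero_lt_one, le_refl 1⟩⟩
  have hbdd : BddAbove (u '' Set.Ioc 0 1) := by
    refine ⟨1, ?_⟩
    rintro y ⟨x, hx, rfl⟩
    exact (hub x hx).2
  have hM0 : 0 ≤ M := by
    have := le_csSup hbdd (mem_image_of_mem u (⟨zero_lt_one, le_refl 1⟩ : (1:ℝ) ∈ Set.Ioc (0:ℝ) 1))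
    rw [hu1] at this
    exact this
  have hMub : ∀ r ∈ Set.Ioc (0:ℝ) 1, u r ≤ M := fun r hr =>
    le_csSup hbdd (mem_image_of_mem u hr)
  by_cases hd0 : d = 0
  · -- Degenerate case : u' ≡ 0, so u ≡ 0 and everything is trivial
    have hzero : ∀ t ∈ Set.Ioc (0:ℝ) 1, deriv u t = 0 := by
      intro t ht
      have h := hdecay t ht
      rw [hd0] at h
      simp only [abs_zero, mul_zero, zero_mul] at h
      exact abs_nonpos_iff.mp h
    have huzero : ∀ r ∈ Set.Ioc (0:ℝ) 1, u r = 0 := by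
      have hconst : ∀ x ∈ Set.Ioo (0:ℝ) 1, ∀ y ∈ Set.Ioo (0:ℝ) 1, u x = u y := by
        intro x hx y hy
        apply Convex.is_const_of_fderivWithin_eq_zero (convex_Ioo (0:ℝ) 1)
          ((hu.mono Ioo_subset_Ioc_self).differentiableOn (by norm_num)) _ hx hy
        intro z hz
        have hnb : Set.Ioo (0:ℝ) 1 ∈ nhds z := isOpen_Ioo.mem_nhds hz
        have hdiff : DifferentiableAt ℝ u z :=
          ((hu.mono Ioo_subset_Ioc_self).differentiableOn (by norm_num)).differentiableAt hnb
        have hD : HasDerivAt u 0 z := by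
          have := hdiff.hasDerivAt
          rwa [hzero z (Ioo_subset_Ioc_self hz)] at this
        have : HasFDerivAt u (0 : ℝ →L[ℝ] ℝ) z := by
          have := hD.hasFDerivAt
          rwa [show (ContinuousLinearMap.toSpanSingleton ℝ (0:ℝ)) = 0 from by ext1; simp] at this
        rw [fderivWithin_of_mem_nhds hnb, this.fderiv]
      have hcont : ContinuousWithinAt u (Set.Ioc 0 1) 1 :=
        hucont.continuousWithinAt ⟨zero_lt_one, le_refl 1⟩
      intro r hr
      rcases eq_or_lt_of_le hr.2 with h1 | h1
      · rw [h1, hu1]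
      have hr' : r ∈ Set.Ioo (0:ℝ) 1 := ⟨hr.1, h1⟩
      have htends : Filter.Tendsto u (nhdsWithin 1 (Set.Ioo 0 1)) (nhds (u 1)) :=
        hcont.tendsto.mono_left (nhdsWithin_mono _ Ioo_subset_Ioc_self)
      have hconst' : ∀ᶠ y in nhdsWithin 1 (Set.Ioo (0:ℝ) 1), u y = u r := by
        filter_upwards [self_mem_nhdsWithin] with y hy
        exact hconst y hy r hr'
      have h2 : Filter.Tendsto u (nhdsWithin 1 (Set.Ioo 0 1)) (nhds (u r)) := by
        rw [Filter.tendsto_congr' hconst']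
        exact tendsto_const_nhds
      have hne : (nhdsWithin (1:ℝ) (Set.Ioo 0 1)).NeBot :=
        mem_closure_iff_nhdsWithin_neBot.mp
          (by rw [closure_Ioo one_ne_zero.symm]; exact ⟨by norm_num, le_refl 1⟩)
      have h3 := tendsto_nhds_unique h2 htends
      rw [h3, hu1]
    have himg : u '' Set.Ioc 0 1 = {0} := by
      apply Subset.antisymm
      · rintro y ⟨x, hx, rfl⟩
        exact huzero x hx
      · rintro y (rfl : y = 0)
        exact ⟨1, ⟨zero_lt_one, le_refl 1⟩, hu1⟩
    have hM : M = 0 := by rw [hM_def, himg, csSup_singleton]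
    refine ⟨⟨0, ?_, ?_⟩, ?_⟩
    · rw [hM, hd0]
      simp [intervalIntegral.integral_same]
    · rw [hM, hd0]
      simp [intervalIntegral.integral_same]
    · rw [hM]; norm_num
  -- Main case : d ≠ 0
  have hdiff1 : DifferentiableAt ℝ u 1 := by
    by_contra hnd
    exact hd0 (deriv_zero_of_not_differentiableAt hnd)
  set v : ℝ → ℝ := derivWithin u (Set.Ioc 0 1) with hv_def
  have hv1 : v 1 = d := by
    rw [hv_def, hd_def]
    exact hdiff1.derivWithin (uniqueDiffOn_Ioc 0 1 1 ⟨zero_lt_one, le_refl 1⟩)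
  have hvcd : ContDiffOn ℝ 1 v (Set.Ioc 0 1) :=
    hu.derivWithin (uniqueDiffOn_Ioc 0 1) (by norm_num)
  have hvcont : ContinuousOn v (Set.Ioc 0 1) := hvcd.continuousOn
  have hveqd : ∀ t ∈ Set.Ioc (0:ℝ) 1, v t = deriv u t := by
    intro t ht
    rcases eq_or_lt_of_le ht.2 with h1 | h1
    · rw [h1, hv1, hd_def]
    · exact derivWithin_of_mem_nhds
        (Filter.mem_of_superset (isOpen_Ioo.mem_nhds ⟨ht.1, h1⟩) Ioo_subset_Ioc_self)
  have hvbound : ∀ t ∈ Set.Ioc (0:ℝ) 1, |v t| ≤ Cn * |d| * t ^ a := by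
    intro t ht
    rw [hveqd t ht]
    exact hdecay t ht
  -- The truncated nonlinearity and its primitive
  set ft : ℝ → ℝ := fun t => f (max t 0) with hft_def
  have hftf : ∀ s : ℝ, 0 ≤ s → ft s = f s := by
    intro s hs
    simp only [hft_def, max_eq_left hs]
  have hftc : ContinuousOn ft (Iio (1:ℝ)) := by
    intro x hx
    have hmax : max x 0 ∈ Ico (0:ℝ) 1 := ⟨le_max_right _ _, max_lt hx one_pos⟩
    have hmaps : MapsTo (fun t : ℝ => max t 0) (Iio 1) (Ico 0 1) := by
      intro y hy
      exact ⟨le_max_right _ _, max_lt hy one_pos⟩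
    have h : ContinuousWithinAt (f ∘ (fun t : ℝ => max t 0)) (Iio 1) x :=
      ContinuousWithinAt.comp (hf.continuousOn.continuousWithinAt hmax)
        ((continuous_id.max continuous_const).continuousWithinAt) hmaps
    exact h
  have hftC : ∀ x ∈ Iio (1:ℝ), ContinuousAt ft x := fun x hx =>
    hftc.continuousAt (isOpen_Iio.mem_nhds hx)
  have hftpos : ∀ s < (1:ℝ), 0 ≤ ft s := fun s hs =>
    hfpos _ ⟨le_max_right _ _, max_lt hs one_pos⟩
  have hftInt : ∀ p q : ℝ, p < 1 → q < 1 → IntervalIntegrable ft volume p q := by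
    intro p q hp hq
    apply ContinuousOn.intervalIntegrable
    apply hftc.mono
    intro x hx
    rw [Set.mem_uIcc] at hx
    rcases hx with h | h
    · exact lt_of_le_of_lt h.2 hq
    · exact lt_of_le_of_lt h.2 hp
  set Ft : ℝ → ℝ := fun t => ∫ s in (0:ℝ)..t, ft s with hFt_def
  have hFtd : ∀ x ∈ Iio (1:ℝ), HasDerivAt Ft (ft x) x := by
    intro x hx
    exact intervalIntegral.integral_hasDerivAt_right (hftInt 0 x one_pos hx)
      (hftc.stronglyMeasurableAtFilter isOpen_Iio x hx) (hftC x hx)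
  have hFtmono : ∀ p q : ℝ, p ≤ q → q < 1 → Ft p ≤ Ft q := by
    intro p q hpq hq
    have hp : p < 1 := lt_of_le_of_lt hpq hq
    have h1 : (∫ s in (0:ℝ)..q, ft s) - ∫ s in (0:ℝ)..p, ft s = ∫ s in p..q, ft s :=
      intervalIntegral.integral_interval_sub_left (hftInt 0 q one_pos hq)
        (hftInt 0 p one_pos hp)
    have h2 : (0:ℝ) ≤ ∫ s in p..q, ft s := intervalIntegral.integral_nonneg hpq
      (fun s hs => hftpos s (lt_of_le_of_lt hs.2 hq))
    simp only [hFt_def]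
    linarith
  have hFt0 : Ft 0 = 0 := intervalIntegral.integral_same
  -- Energy identity
  have hEnergy : ∀ c, 0 < c → c ≤ 1 → (∀ r ∈ Icc c 1, u r < 1) →
      Ft (u c) + (v c)^2/2 = d^2/2 + ∫ t in c..1, (((n:ℝ)-1) * (v t)^2 / t) := by
    have hFtcont : ContinuousOn Ft (Iio (1:ℝ)) := fun x hx =>
      ((hFtd x hx).continuousAt).continuousWithinAt
    intro c hc0 hc1 hult
    set E : ℝ → ℝ := fun r => Ft (u r) + (v r)^2/2 with hE_def
    set g : ℝ → ℝ := fun t => -(((n:ℝ)-1) * (v t)^2 / t) with hg_def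
    have hIccsub : Icc c 1 ⊆ Set.Ioc 0 1 := fun x hx => ⟨lt_of_lt_of_le hc0 hx.1, hx.2⟩
    have hEcont : ContinuousOn E (Icc c 1) := by
      apply ContinuousOn.add
      · exact (hFtcont.comp (hucont.mono hIccsub) (fun x hx => hult x hx))
      · exact (((hvcont.mono hIccsub).pow 2).div_const 2)
    have hEderiv : ∀ x ∈ Ioo c 1, HasDerivWithinAt E (g x) (Ioi x) x := by
      intro x hx
      have hx01 : x ∈ Set.Ioo (0:ℝ) 1 := ⟨lt_trans hc0 hx.1, hx.2⟩
      have hnb : Set.Ioc (0:ℝ) 1 ∈ nhds x :=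
        Filter.mem_of_superset (isOpen_Ioo.mem_nhds hx01) Ioo_subset_Ioc_self
      have hveq : v x = deriv u x := derivWithin_of_mem_nhds hnb
      have h1 : HasDerivAt u (v x) x := by
        rw [hveq]
        exact ((hu.differentiableOn (by norm_num)).differentiableAt hnb).hasDerivAt
      have h2 : HasDerivAt v (deriv v x) x :=
        ((hvcd.differentiableOn (by norm_num)).differentiableAt hnb).hasDerivAt
      have hwq : deriv v x = deriv (deriv u) x := by
        apply Filter.EventuallyEq.deriv_eq
        filter_upwards [isOpen_Ioo.mem_nhds hx01] with y hy
        exact derivWithin_of_mem_nhds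
          (Filter.mem_of_superset (isOpen_Ioo.mem_nhds hy) Ioo_subset_Ioc_self)
      have hux : u x ∈ Iio (1:ℝ) := hult x ⟨le_of_lt hx.1, le_of_lt hx.2⟩
      have h3 : HasDerivAt Ft (ft (u x)) (u x) := hFtd _ hux
      have h4 : HasDerivAt (fun r => Ft (u r)) (ft (u x) * v x) x := h3.comp x h1
      have h5 : HasDerivAt (fun r => (v r)^2/2) ((2:ℕ) * v x ^ 1 * deriv v x / 2) x :=
        (h2.pow 2).div_const 2
      have hsum := h4.add h5
      have hval : ft (u x) * v x + (2:ℕ) * v x ^ 1 * deriv v x / 2 = g x := by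
        have hfux : ft (u x) = f (u x) := hftf _ (hub x (Ioo_subset_Ioc_self hx01)).1
        have he := heq x hx01
        rw [← hwq, ← hveq] at he
        rw [hfux, ← he]
        have hxne : x ≠ 0 := ne_of_gt hx01.1
        simp only [pow_one]
        push_cast
        ring
      rw [hval] at hsum
      exact hsum.hasDerivWithinAt
    have hgint : IntervalIntegrable g volume c 1 := by
      apply ContinuousOn.intervalIntegrable
      have huIcc : uIcc c 1 = Icc c 1 := uIcc_of_le hc1
      rw [huIcc]
      apply ContinuousOn.neg
      apply ContinuousOn.div
      · exact (continuousOn_const.mul ((hvcont.mono hIccsub).pow 2))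
      · exact continuousOn_id
      · intro x hx
        exact ne_of_gt (lt_of_lt_of_le hc0 hx.1)
    have hFTC := intervalIntegral.integral_eq_sub_of_hasDeriv_right_of_le hc1 hEcont hEderiv hgint
    have hE1 : E 1 = d^2/2 := by
      simp only [hE_def, hu1, hFt0, hv1]
      ring
    have hgneg : (∫ y in c..1, g y)
        = -∫ t in c..1, (((n:ℝ)-1) * (v t)^2 / t) := by
      simp only [hg_def]
      rw [← intervalIntegral.integral_neg]
    rw [hE1, hgneg] at hFTC
    have hEc : E c = Ft (u c) + (v c)^2/2 := rfl
    linarith [hFTC]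
  -- Bound on the energy integral
  have hIbound : ∀ c, 0 < c → c ≤ 1 →
      (0 ≤ ∫ t in c..1, (((n:ℝ)-1) * (v t)^2 / t)) ∧
      (∫ t in c..1, (((n:ℝ)-1) * (v t)^2 / t)) ≤ ((n:ℝ)-1) * Cn^2 * d^2 / (2*a) := by
    intro c hc0 hc1
    have hIccsub : Icc c 1 ⊆ Set.Ioc 0 1 := fun x hx => ⟨lt_of_lt_of_le hc0 hx.1, hx.2⟩
    have hgcont : ContinuousOn (fun t => (((n:ℝ)-1) * (v t)^2 / t)) (Icc c 1) := by
      apply ContinuousOn.div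
      · exact continuousOn_const.mul ((hvcont.mono hIccsub).pow 2)
      · exact continuousOn_id
      · exact fun x hx => ne_of_gt (lt_of_lt_of_le hc0 hx.1)
    have hgint : IntervalIntegrable (fun t => (((n:ℝ)-1) * (v t)^2 / t)) volume c 1 := by
      apply ContinuousOn.intervalIntegrable
      rwa [uIcc_of_le hc1]
    constructor
    · apply intervalIntegral.integral_nonneg hc1
      intro t ht
      have ht0 : 0 < t := lt_of_lt_of_le hc0 ht.1
      positivity
    · have hhcont : ContinuousOn (fun t : ℝ => ((n:ℝ)-1) * Cn^2 * d^2 * t ^ (2*a-1)) (Icc c 1) := by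
        apply continuousOn_const.mul
        apply ContinuousOn.rpow_const continuousOn_id
        exact fun x hx => Or.inl (ne_of_gt (lt_of_lt_of_le hc0 hx.1))
      have hhint : IntervalIntegrable (fun t : ℝ => ((n:ℝ)-1) * Cn^2 * d^2 * t ^ (2*a-1)) volume c 1 := by
        apply ContinuousOn.intervalIntegrable
        rwa [uIcc_of_le hc1]
      have hmono := intervalIntegral.integral_mono_on hc1 hgint hhint ?ptwise
      case ptwise =>
        intro t ht
        have ht0 : 0 < t := lt_of_lt_of_le hc0 ht.1
        have hb := hvbound t (hIccsub ht)
        have hBnn : 0 ≤ Cn * |d| * t ^ a := le_trans (abs_nonneg _) hb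
        have hsq : (v t)^2 ≤ (Cn * |d| * t ^ a)^2 := by
          rw [← sq_abs (v t)]
          exact pow_le_pow_left₀ (abs_nonneg _) hb 2
        have hta : (t ^ a)^2 = t ^ (2*a) := by
          rw [← Real.rpow_natCast (t^a) 2, ← Real.rpow_mul ht0.le]
          norm_num [mul_comm]
        have hexp : (Cn * |d| * t ^ a)^2 = Cn^2 * d^2 * t ^ (2*a) := by
          rw [mul_pow, mul_pow, sq_abs, hta]
        have h2 : ((n:ℝ)-1) * (v t)^2 / t ≤ ((n:ℝ)-1) * (Cn^2 * d^2 * t ^ (2*a)) / t := by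
          gcongr
          rw [← hexp]; exact hsq
        have h3 : t ^ (2*a-1) = t ^ (2*a) / t := by
          rw [Real.rpow_sub ht0, Real.rpow_one]
        calc ((n:ℝ)-1) * (v t)^2 / t ≤ ((n:ℝ)-1) * (Cn^2 * d^2 * t ^ (2*a)) / t := h2
          _ = ((n:ℝ)-1) * Cn^2 * d^2 * t ^ (2*a-1) := by rw [h3]; ring
      calc (∫ t in c..1, (((n:ℝ)-1) * (v t)^2 / t))
          ≤ ∫ t in c..1, ((n:ℝ)-1) * Cn^2 * d^2 * t ^ (2*a-1) := hmono
        _ = ((n:ℝ)-1) * Cn^2 * d^2 * ∫ t in c..1, t ^ (2*a-1) := by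
            rw [← intervalIntegral.integral_const_mul]
        _ = ((n:ℝ)-1) * Cn^2 * d^2 * ((1 ^ (2*a-1+1) - c ^ (2*a-1+1))/(2*a-1+1)) := by
            rw [integral_rpow (Or.inl (by linarith))]
        _ ≤ ((n:ℝ)-1) * Cn^2 * d^2 / (2*a) := by
            rw [Real.one_rpow]
            have h2a : 0 < 2*a := by linarith
            have hfac : (0:ℝ) ≤ ((n:ℝ)-1) * Cn^2 * d^2 := by positivity
            rw [show 2*a-1+1 = 2*a by ring]
            have hnum : (1 - c ^ (2*a))/(2*a) ≤ 1/(2*a) := by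
              gcongr
              nlinarith [Real.rpow_nonneg hc0.le (2*a)]
            calc ((n:ℝ)-1) * Cn^2 * d^2 * ((1 - c ^ (2*a))/(2*a))
                ≤ ((n:ℝ)-1) * Cn^2 * d^2 * (1/(2*a)) := mul_le_mul_of_nonneg_left hnum hfac
              _ = ((n:ℝ)-1) * Cn^2 * d^2 / (2*a) := by ring
  set B : ℝ := d^2/2 + ((n:ℝ)-1) * Cn^2 * d^2 / (2*a) with hB_def
  have hEhighG : ∀ c, 0 < c → c ≤ 1 → (∀ r ∈ Icc c 1, u r < 1) → Ft (u c) ≤ B := by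
    intro c hc0 hc1 hult
    have h1 := hEnergy c hc0 hc1 hult
    have h2 := (hIbound c hc0 hc1).2
    rw [hB_def]
    nlinarith [sq_nonneg (v c)]
  -- Find a level t₀ < 1 with Ft t₀ > B
  obtain ⟨t₀, ht₀0, ht₀1, hFt₀⟩ : ∃ t₀ : ℝ, 0 < t₀ ∧ t₀ < 1 ∧ B < Ft t₀ := by
    set tk : ℕ → ℝ := fun k => 1 - 1/(k+2) with htk_def
    have htk0 : ∀ k : ℕ, 0 < tk k := by
      intro k
      have h2 : (2:ℝ) ≤ (k:ℝ) + 2 := by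
        have := Nat.cast_nonneg (α := ℝ) k
        linarith
      have : 1/((k:ℝ)+2) ≤ 1/2 := one_div_le_one_div_of_le two_pos h2
      simp only [htk_def]
      linarith
    have htk1 : ∀ k : ℕ, tk k < 1 := by
      intro k
      have : 0 < 1/((k:ℝ)+2) := by positivity
      simp only [htk_def]; linarith
    set gI : ℝ → ENNReal := fun s => ENNReal.ofReal (f s) with hg_def
    set μ := volume.restrict (Set.Ioo (0:ℝ) 1) with hμ_def
    have haem : AEMeasurable gI μ := by
      apply ENNReal.measurable_ofReal.comp_aemeasurable
      exact (hf.continuousOn.mono (fun x (hx : x ∈ Set.Ioo (0:ℝ) 1) => ⟨hx.1.le, hx.2⟩)).aemeasurable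
        measurableSet_Ioo
    set gk : ℕ → ℝ → ENNReal := fun k => (Iio (tk k)).indicator gI with hgk_def
    have hmono : ∀ x, Monotone fun k => gk k x := by
      intro x j k hjk
      apply Set.indicator_le_indicator_of_subset
      · apply Iio_subset_Iio
        have : 1/((k:ℝ)+2) ≤ 1/((j:ℝ)+2) := by
          apply one_div_le_one_div_of_le (by positivity)
          have : (j:ℝ) ≤ (k:ℝ) := by exact_mod_cast hjk
          linarith
        simp only [htk_def]; linarith
      · exact fun a => zero_le
    have hsup : ∀ x ∈ Set.Ioo (0:ℝ) 1, (⨆ k, gk k x) = gI x := by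
      intro x hx
      obtain ⟨m, hm⟩ := exists_nat_one_div_lt (by linarith [hx.2] : (0:ℝ) < 1 - x)
      apply le_antisymm
      · exact iSup_le fun k => Set.indicator_le_self _ _ x
      · apply le_iSup_of_le m
        have hxm : x ∈ Iio (tk m) := by
          simp only [htk_def, mem_Iio]
          have : 1/((m:ℝ)+2) < 1/((m:ℝ)+1) := by
            apply one_div_lt_one_div_of_lt (by positivity)
            linarith
          push_cast at hm ⊢
          linarith
        exact le_of_eq (Set.indicator_of_mem hxm gI).symm
    have hcalc : (⨆ k, ∫⁻ x, gk k x ∂μ) = ⊤ := by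
      rw [← MeasureTheory.lintegral_iSup' (fun k => haem.indicator measurableSet_Iio)
        (Filter.Eventually.of_forall hmono)]
      rw [← hF1]
      apply lintegral_congr_ae
      exact (ae_restrict_iff' measurableSet_Ioo).2
        (Filter.Eventually.of_forall (fun x hx => hsup x hx))
    obtain ⟨k, hk⟩ : ∃ k, ENNReal.ofReal B < ∫⁻ x, gk k x ∂μ := by
      rw [← lt_iSup_iff, hcalc]
      exact ENNReal.ofReal_lt_top
    refine ⟨tk k, htk0 k, htk1 k, ?_⟩
    have h1 : (∫⁻ x, gk k x ∂μ) = ∫⁻ x in Set.Ioo 0 (tk k), gI x := by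
      rw [hgk_def]
      simp only []
      rw [lintegral_indicator measurableSet_Iio, hμ_def,
        Measure.restrict_restrict measurableSet_Iio]
      congr 1
      rw [show Iio (tk k) ∩ Set.Ioo (0:ℝ) 1 = Set.Ioo 0 (tk k) by
        ext x
        simp only [mem_inter_iff, mem_Iio, mem_Ioo]
        constructor
        · rintro ⟨h1, h2, h3⟩; exact ⟨h2, h1⟩
        · rintro ⟨h1, h2⟩; exact ⟨h2, h1, lt_trans h2 (htk1 k)⟩]
    have h2 : (∫⁻ x in Set.Ioo 0 (tk k), gI x) = ∫⁻ x in Set.Ioo 0 (tk k), ENNReal.ofReal (ft x) := by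
      apply setLIntegral_congr_fun measurableSet_Ioo
      exact (fun x hx => by rw [hg_def, hftf x hx.1.le])
    have h3 : (∫⁻ x in Set.Ioo 0 (tk k), ENNReal.ofReal (ft x))
        ≤ ∫⁻ x in Set.Ioc 0 (tk k), ENNReal.ofReal (ft x) :=
      lintegral_mono_set Ioo_subset_Ioc_self
    have hfint : IntegrableOn ft (Set.Ioc 0 (tk k)) volume := by
      apply IntegrableOn.mono_set _ Ioc_subset_Icc_self
      apply ContinuousOn.integrableOn_Icc
      apply hftc.mono
      intro x hx
      exact lt_of_le_of_lt hx.2 (htk1 k)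
    have h4 : (∫⁻ x in Set.Ioc 0 (tk k), ENNReal.ofReal (ft x))
        = ENNReal.ofReal (∫ x in Set.Ioc 0 (tk k), ft x) := by
      rw [MeasureTheory.ofReal_integral_eq_lintegral_ofReal hfint]
      exact (ae_restrict_iff' measurableSet_Ioc).2 (Filter.Eventually.of_forall
        (fun x hx => hftpos x (lt_of_le_of_lt hx.2 (htk1 k))))
    have h5 : (∫ x in Set.Ioc 0 (tk k), ft x) = ∫ s in (0:ℝ)..(tk k), ft s :=
      (intervalIntegral.integral_of_le (htk0 k).le).symm
    by_contra hcon
    push_neg at hcon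
    rw [h1, h2] at hk
    have := lt_of_lt_of_le hk (le_trans h3 (le_of_eq h4))
    rw [h5] at this
    exact absurd (ENNReal.ofReal_le_ofReal hcon) (not_le_of_gt this)
  -- u stays below t₀
  have hub2 : ∀ r ∈ Set.Ioc (0:ℝ) 1, u r ≤ t₀ := by
    intro r hr
    by_contra hcon
    push_neg at hcon
    have hr1 : r < 1 := by
      rcases eq_or_lt_of_le hr.2 with h | h
      · rw [h, hu1] at hcon; linarith
      · exact h
    set S := Icc r 1 ∩ u ⁻¹' (Ici t₀) with hS_def
    have hIccsub : Icc r 1 ⊆ Set.Ioc 0 1 := fun x hx => ⟨lt_of_lt_of_le hr.1 hx.1, hx.2⟩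
    have hSclosed : IsClosed S :=
      ContinuousOn.preimage_isClosed_of_isClosed (hucont.mono hIccsub) isClosed_Icc isClosed_Ici
    have hScomp : IsCompact S := isCompact_Icc.of_isClosed_subset hSclosed inter_subset_left
    have hSne : S.Nonempty := ⟨r, ⟨le_refl r, hr1.le⟩, hcon.le⟩
    set c := sSup S with hc_def
    have hcS : c ∈ S := hScomp.sSup_mem hSne
    have hc0 : 0 < c := lt_of_lt_of_le hr.1 hcS.1.1
    have hct₀ : t₀ ≤ u c := hcS.2
    have hc1 : c < 1 := by
      rcases eq_or_lt_of_le hcS.1.2 with h | h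
      · rw [h, hu1] at hct₀; linarith
      · exact h
    have hgt : ∀ x ∈ Ioc c 1, u x < t₀ := by
      intro x hx
      by_contra hcx
      push_neg at hcx
      have hxS : x ∈ S := ⟨⟨le_trans hcS.1.1 hx.1.le, hx.2⟩, hcx⟩
      exact absurd (le_csSup hScomp.bddAbove hxS) (not_le_of_gt hx.1)
    have huc : u c ≤ t₀ := by
      have hne : (nhdsWithin c (Set.Ioc c 1)).NeBot :=
        mem_closure_iff_nhdsWithin_neBot.mp
          (by rw [closure_Ioc (ne_of_lt hc1)]; exact ⟨le_refl c, hc1.le⟩)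
      have htends : Filter.Tendsto u (nhdsWithin c (Set.Ioc c 1)) (nhds (u c)) :=
        (hucont.continuousWithinAt ⟨hc0, hc1.le⟩).tendsto.mono_left
          (nhdsWithin_mono _ (fun x hx => ⟨lt_of_lt_of_le hc0 hx.1.le, hx.2⟩))
      apply le_of_tendsto htends
      filter_upwards [self_mem_nhdsWithin] with x hx
      exact (hgt x hx).le
    have huct₀ : u c = t₀ := le_antisymm huc hct₀
    have hult : ∀ x ∈ Icc c 1, u x < 1 := by
      intro x hx
      rcases eq_or_lt_of_le hx.1 with h | h
      · rw [← h, huct₀]; exact ht₀1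
      · exact lt_trans (hgt x ⟨h, hx.2⟩) ht₀1
    have := hEhighG c hc0 hc1.le hult
    rw [huct₀] at this
    linarith
  have hM1 : M < 1 := by
    have hMt₀ : M ≤ t₀ := by
      rw [hM_def]
      apply csSup_le hMne
      rintro y ⟨x, hx, rfl⟩
      exact hub2 x hx
    linarith
  -- energy bounds at all points
  have hultG : ∀ c, 0 < c → (∀ r ∈ Icc c 1, u r < 1) := by
    intro c hc0 r hr
    exact lt_of_le_of_lt (hub2 r ⟨lt_of_lt_of_le hc0 hr.1, hr.2⟩) ht₀1
  have hElow : ∀ c ∈ Set.Ioc (0:ℝ) 1, d^2/2 ≤ Ft (u c) + (v c)^2/2 := by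
    intro c hc
    have h1 := hEnergy c hc.1 hc.2 (hultG c hc.1)
    have h2 := (hIbound c hc.1 hc.2).1
    linarith
  have hEhigh : ∀ c ∈ Set.Ioc (0:ℝ) 1, Ft (u c) ≤ B := fun c hc =>
    hEhighG c hc.1 hc.2 (hultG c hc.1)
  -- bound for ft on [0, M]
  obtain ⟨K, hK⟩ : ∃ K, ∀ s ∈ Icc (0:ℝ) M, ‖ft s‖ ≤ K := by
    apply IsCompact.exists_bound_of_continuousOn isCompact_Icc
    apply hftc.mono
    intro x hx
    exact lt_of_le_of_lt hx.2 hM1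
  have hKnn : 0 ≤ K := le_trans (norm_nonneg _) (hK 0 ⟨le_refl 0, hM0⟩)
  -- approximating sequence for the sup
  have hex : ∀ k : ℕ, ∃ x ∈ Set.Ioc (0:ℝ) 1, M - 1/(k+1) < u x := by
    intro k
    have hlt : M - 1/(k+1) < sSup (u '' Set.Ioc 0 1) := by
      rw [← hM_def]
      have : 0 < 1/((k:ℝ)+1) := by positivity
      linarith
    obtain ⟨y, hy, hy2⟩ := exists_lt_of_lt_csSup hMne hlt
    obtain ⟨x, hx, rfl⟩ := hy
    exact ⟨x, hx, hy2⟩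
  choose r hr hur using hex
  have hFtM : d^2/2 ≤ Ft M ∧ Ft M ≤ B := by
    have hsplit : ∀ p : ℝ, 0 ≤ p → p ≤ M → Ft M ≤ Ft p + K * (M - p) := by
      intro p hp0 hpM
      have h1 := intervalIntegral.integral_interval_sub_left (hftInt 0 M one_pos hM1)
          (hftInt 0 p one_pos (lt_of_le_of_lt hpM hM1))
      have h2 : ‖∫ s in p..M, ft s‖ ≤ K * |M - p| := by
        apply intervalIntegral.norm_integral_le_of_norm_le_const
        intro x hx
        rw [uIoc_of_le hpM] at hx
        exact hK x ⟨le_trans hp0 hx.1.le, hx.2⟩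
      rw [abs_of_nonneg (by linarith)] at h2
      rw [Real.norm_eq_abs] at h2
      have h3 : Ft M - Ft p ≤ K * (M - p) := by
        rw [hFt_def]
        simp only []
        rw [h1]
        exact le_trans (le_abs_self _) h2
      linarith
    have hupper : Ft M ≤ B := by
      have hk : ∀ k : ℕ, Ft M ≤ B + K * (1/(k+1)) := by
        intro k
        have h1 := hsplit (u (r k)) (hub _ (hr k)).1 (hMub _ (hr k))
        have h2 := hEhigh (r k) (hr k)
        have h3 : M - u (r k) ≤ 1/(k+1) := by
          have := hur k
          push_cast at this ⊢
          linarith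
        exact le_trans h1 (add_le_add h2 (mul_le_mul_of_nonneg_left h3 hKnn))
      apply ge_of_tendsto (f := fun k : ℕ => B + K * (1/(k+1)))
        (x := Filter.atTop) ?_ (Filter.Eventually.of_forall hk)
      have h0 : Filter.Tendsto (fun k : ℕ => 1/((k:ℝ)+1)) Filter.atTop (nhds 0) :=
        tendsto_one_div_add_atTop_nhds_zero_nat
      have := (h0.const_mul K).const_add B
      simpa using this
    refine ⟨?_, hupper⟩
    obtain ⟨p, hp, φ, hφmono, hφtends⟩ :=
      isCompact_Icc.tendsto_subseq (x := r) (fun k => ⟨(hr k).1.le, (hr k).2⟩)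
    have hrtends : Filter.Tendsto (fun k => u (r (φ k))) Filter.atTop (nhds M) := by
      apply tendsto_of_tendsto_of_tendsto_of_le_of_le
        (g := fun k : ℕ => M - 1/((k:ℝ)+1)) (h := fun _ : ℕ => M)
      · have h0 : Filter.Tendsto (fun k : ℕ => 1/((k:ℝ)+1)) Filter.atTop (nhds 0) :=
          tendsto_one_div_add_atTop_nhds_zero_nat
        have := h0.const_sub M
        simpa using this
      · exact tendsto_const_nhds
      · intro k
        have h1 := hur (φ k)
        have h2 : 1/((φ k : ℝ)+1) ≤ 1/((k:ℝ)+1) := by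
          apply one_div_le_one_div_of_le (by positivity)
          have : (k:ℝ) ≤ (φ k : ℝ) := by exact_mod_cast hφmono.le_apply
          linarith
        linarith
      · exact fun k => hMub _ (hr (φ k))
    rcases eq_or_lt_of_le hp.1 with hp0 | hp0
    · have hr0 : Filter.Tendsto (fun k => r (φ k)) Filter.atTop (nhds 0) := by
        rw [← hp0] at hφtends; exact hφtends
      have hrpow : Filter.Tendsto (fun k => Cn * |d| * (r (φ k)) ^ a) Filter.atTop (nhds 0) := by
        have hcont : Filter.Tendsto (fun x : ℝ => x ^ a) (nhds 0) (nhds ((0:ℝ) ^ a)) :=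
          (Real.continuousAt_rpow_const 0 a (Or.inr ha.le)).tendsto
        rw [Real.zero_rpow (ne_of_gt ha)] at hcont
        have := (hcont.comp hr0).const_mul (Cn * |d|)
        simpa using this
      have hvk : Filter.Tendsto (fun k => v (r (φ k))) Filter.atTop (nhds 0) := by
        apply squeeze_zero_norm (fun k => hvbound _ (hr (φ k))) hrpow
      have hkk : ∀ k, d^2/2 - (v (r (φ k)))^2/2 ≤ Ft M := by
        intro k
        have h1 := hElow _ (hr (φ k))
        have h2 : Ft (u (r (φ k))) ≤ Ft M := hFtmono _ _ (hMub _ (hr (φ k))) hM1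
        linarith
      apply le_of_tendsto (f := fun k => d^2/2 - (v (r (φ k)))^2/2)
        (x := Filter.atTop) ?_ (Filter.Eventually.of_forall hkk)
      have := ((hvk.pow 2).div_const 2).const_sub (d^2/2)
      simpa using this
    · have hpIoc : p ∈ Set.Ioc (0:ℝ) 1 := ⟨hp0, hp.2⟩
      have hcw : Filter.Tendsto (fun k => u (r (φ k))) Filter.atTop (nhds (u p)) := by
        apply ((hucont.continuousWithinAt hpIoc).tendsto).comp
        apply tendsto_nhdsWithin_of_tendsto_nhds_of_eventually_within _ hφtends
        exact Filter.Eventually.of_forall (fun k => hr (φ k))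
      have hupM : u p = M := tendsto_nhds_unique hcw hrtends
      rcases eq_or_lt_of_le hp.2 with hp1 | hp1
      · exfalso
        rw [hp1] at hupM
        rw [hu1] at hupM
        have huzero : ∀ x ∈ Set.Ioc (0:ℝ) 1, u x = 0 := by
          intro x hx
          exact le_antisymm (le_of_le_of_eq (hMub x hx) hupM.symm) (hub x hx).1
        have hvz : v 1 = 0 := by
          rw [hv_def]
          rw [derivWithin_congr (fun x hx => huzero x hx) hu1]
          exact congrFun (derivWithin_const (Set.Ioc 0 1) (0:ℝ)) 1
        exact hd0 (by rw [← hv1]; exact hvz)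
      · have hnb : Set.Ioc (0:ℝ) 1 ∈ nhds p :=
          Filter.mem_of_superset (isOpen_Ioo.mem_nhds ⟨hp0, hp1⟩) Ioo_subset_Ioc_self
        have hlocmax : IsLocalMax u p := by
          filter_upwards [hnb] with y hy
          rw [hupM]
          exact hMub y hy
        have hderiv0 : deriv u p = 0 := hlocmax.deriv_eq_zero
        have hvp : v p = 0 := by
          rw [hv_def, derivWithin_of_mem_nhds hnb, hderiv0]
        have := hElow p hpIoc
        rw [hvp, hupM] at this
        linarith
  -- conclude
  have hintM : (∫ s in (0:ℝ)..M, f s) = Ft M := by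
    rw [hFt_def]
    simp only []
    apply intervalIntegral.integral_congr
    intro s hs
    rw [uIcc_of_le hM0] at hs
    exact (hftf s hs.1).symm
  refine ⟨⟨1/2 + ((n:ℝ)-1) * Cn^2 / (2*a), ?_, ?_⟩, hM1⟩
  · rw [hintM]
    exact hFtM.1
  · rw [hintM]
    have hBeq : (1/2 + ((n:ℝ)-1) * Cn^2 / (2*a)) * d^2 = B := by
      rw [hB_def]
      field_simp
    rw [hBeq]
    exact hFtM.2
end
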